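/- arXiv:1108.5627 — 12 statements merged into one kernel-verified Lean document; each statement's English description precedes it below -/
import Mathlib

section
/- If Γ = {γ_k} is a B-multiplier sequence for a simple set of polynomials B, then for every positive integer m, the sequence {γ_k^m} is also a B-multiplier sequence. -/
open Polynomial

/-- A real polynomial has only real zeros: either it is the zero polynomial
(by convention), or every complex root is real. -/
def RealRooted (p : Polynomial ℝ) : Prop :=
  p = 0 ∨ ∀ z : ℂ, Polynomial.aeval z p = 0 → z.im = 0

/-- A simple set of polynomials: deg b_k = k for all k. -/
def SimpleSet (B : ℕ → Polynomial ℝ) : Prop :=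
  ∀ k, (B k).degree = (k : ℕ)

/-- γ is a B-multiplier sequence: applying γ to B-expansion coefficients of any
polynomial with only real zeros yields a polynomial with only real zeros. -/
def IsMultSeq (B : ℕ → Polynomial ℝ) (γ : ℕ → ℝ) : Prop :=
  ∀ (n : ℕ) (a : ℕ → ℝ),
    RealRooted (∑ k ∈ Finset.range (n + 1), Polynomial.C (a k) * B k) →
    RealRooted (∑ k ∈ Finset.range (n + 1), Polynomial.C (a k * γ k) * B k)

/-- A classical multiplier sequence: multiplier sequence for the standard basis. -/
def ClassicalMS (γ : ℕ → ℝ) : Prop :=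
  IsMultSeq (fun k => Polynomial.X ^ k) γ

theorem stmt_0 (B : ℕ → Polynomial ℝ) (hB : SimpleSet B) (γ : ℕ → ℝ)
    (hγ : IsMultSeq B γ) (m : ℕ) (hm : 1 ≤ m) :
    IsMultSeq B (fun k => γ k ^ m) := by
  induction m, hm using Nat.le_induction with
  | base => simpa using hγ
  | succ m hm ih =>
    intro n a h
    have h2 := hγ n (fun k => a k * γ k ^ m) (ih n a h)
    simpa [pow_succ, mul_assoc] using h2
end

section
/- Let Q = {q_k} be a simple set of polynomials, {c_k} a sequence of nonzero real numbers, α a nonzero real, and β a real number. Define q̂_k(x) = c_k q_k(αx + β). Then a real sequence {γ_k} is a Q-multiplier sequence if and only if it is a Q̂-multiplier sequence, where Q̂ = {q̂_k}. -/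
open Polynomial

lemma comp_affine_zero_iff (p : ℝ[X]) (α β : ℝ) (hα : α ≠ 0) :
    p.comp (C α * X + C β) = 0 ↔ p = 0 := by
  rw [Polynomial.comp_eq_zero_iff]
  constructor
  · rintro (h | ⟨-, h⟩)
    · exact h
    · exfalso
      have := congrArg (fun q => q.coeff 1) h
      simp [coeff_add, coeff_C_mul] at this
      exact hα this
  · exact Or.inl

lemma RealRooted_comp_affine (p : ℝ[X]) (α β : ℝ) (hα : α ≠ 0) :
    RealRooted (p.comp (C α * X + C β)) ↔ RealRooted p := by
  have key : ∀ z : ℂ, aeval z (p.comp (C α * X + C β)) = aeval ((α : ℂ) * z + β) p := by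
    intro z; rw [aeval_comp]; simp
  constructor
  · rintro (h | h)
    · exact Or.inl ((comp_affine_zero_iff p α β hα).mp h)
    · refine Or.inr fun z hz => ?_
      have : aeval (((z - β) / α : ℂ)) (p.comp (C α * X + C β)) = 0 := by
        rw [key]
        have : (α : ℂ) * ((z - β) / α) + β = z := by
          have hα' : (α : ℂ) ≠ 0 := by exact_mod_cast hα
          field_simp
          ring
        rw [this, hz]
      have h2 := h _ this
      have him : ((z - β) / (α : ℂ)).im = z.im / α := by
        rw [Complex.div_ofReal_im]; simp
      rw [him] at h2
      field_simp at h2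
      simpa using h2
  · rintro (h | h)
    · exact Or.inl (by simp [h])
    · refine Or.inr fun z hz => ?_
      rw [key] at hz
      have h2 := h _ hz
      have : ((α : ℂ) * z + β).im = α * z.im := by
        simp [Complex.add_im, Complex.mul_im]
      rw [this] at h2
      exact (mul_eq_zero.mp h2).resolve_left hα

theorem stmt_1 (Q : ℕ → Polynomial ℝ) (hQ : SimpleSet Q)
    (c : ℕ → ℝ) (hc : ∀ k, c k ≠ 0) (α β : ℝ) (hα : α ≠ 0)
    (Qhat : ℕ → Polynomial ℝ)
    (hQhat : ∀ k, Qhat k =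
      Polynomial.C (c k) * (Q k).comp (Polynomial.C α * Polynomial.X + Polynomial.C β))
    (γ : ℕ → ℝ) :
    IsMultSeq Q γ ↔ IsMultSeq Qhat γ := by
  have hsum : ∀ (n : ℕ) (b : ℕ → ℝ),
      ∑ k ∈ Finset.range (n + 1), C (b k) * Qhat k =
      (∑ k ∈ Finset.range (n + 1), C (b k * c k) * Q k).comp (C α * X + C β) := by
    intro n b
    conv_rhs => rw [Polynomial.comp, Polynomial.eval₂_finset_sum]
    refine Finset.sum_congr rfl fun k _ => ?_
    rw [hQhat k, ← Polynomial.comp, Polynomial.mul_comp, Polynomial.C_comp, C_mul]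
    ring
  constructor
  · intro H n a ha
    rw [hsum] at ha ⊢
    rw [RealRooted_comp_affine _ _ _ hα] at ha ⊢
    have := H n (fun k => a k * c k) ha
    have e : ∑ k ∈ Finset.range (n + 1), C (a k * γ k * c k) * Q k
        = ∑ k ∈ Finset.range (n + 1), C ((fun k => a k * c k) k * γ k) * Q k :=
      Finset.sum_congr rfl fun k _ => by ring_nf
    rw [e]; exact this
  · intro H n a ha
    have h1 : RealRooted (∑ k ∈ Finset.range (n + 1), C (a k / c k) * Qhat k) := by
      rw [hsum, RealRooted_comp_affine _ _ _ hα]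
      have e : ∑ k ∈ Finset.range (n + 1), C (a k / c k * c k) * Q k
          = ∑ k ∈ Finset.range (n + 1), C (a k) * Q k :=
        Finset.sum_congr rfl fun k _ => by rw [div_mul_cancel₀ _ (hc k)]
      rw [e]; exact ha
    have := H n (fun k => a k / c k) h1
    rw [hsum, RealRooted_comp_affine _ _ _ hα] at this
    have e : ∑ k ∈ Finset.range (n + 1), C ((fun k => a k / c k) k * γ k * c k) * Q k
        = ∑ k ∈ Finset.range (n + 1), C (a k * γ k) * Q k :=
      Finset.sum_congr rfl fun k _ => by
        congr 1
        congr 1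
        field_simp [hc k]
    rw [e] at this; exact this
end

section
/- Let B be a simple set of polynomials such that every classical multiplier sequence is a B-multiplier sequence. Then there exists α > 1 such that both {α^k} and {(1/α)^k} are B-multiplier sequences. -/
open Polynomial

lemma classical_geom (α : ℝ) (hα : α ≠ 0) : ClassicalMS (fun k => α ^ k) := by
  intro n a hp
  set p := ∑ k ∈ Finset.range (n + 1), Polynomial.C (a k) * X ^ k with hpdef
  have key : (∑ k ∈ Finset.range (n + 1), Polynomial.C (a k * α ^ k) * X ^ k)
      = p.comp (Polynomial.C α * X) := by
    rw [hpdef]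
    simp only [Polynomial.comp, Polynomial.eval₂_finset_sum, Polynomial.eval₂_mul,
      Polynomial.eval₂_C, Polynomial.eval₂_X_pow, mul_pow, ← Polynomial.C_pow, map_mul]
    simp [mul_assoc]
  simp only []
  rw [key]
  rcases hp with hp | hp
  · left; rw [hp, Polynomial.zero_comp]
  · right
    intro z hz
    have : Polynomial.aeval ((α : ℂ) * z) p = 0 := by
      rw [Polynomial.aeval_comp] at hz
      simpa using hz
    have him := hp _ this
    have : α * z.im = 0 := by
      simpa [Complex.mul_im] using him
    rcases mul_eq_zero.mp this with h' | h'
    · exact absurd h' hα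
    · exact h'

theorem stmt_3 (B : ℕ → Polynomial ℝ) (hB : SimpleSet B)
    (h : ∀ γ : ℕ → ℝ, ClassicalMS γ → IsMultSeq B γ) :
    ∃ α : ℝ, 1 < α ∧ IsMultSeq B (fun k => α ^ k) ∧
      IsMultSeq B (fun k => (1 / α) ^ k) := by
  refine ⟨2, one_lt_two, h _ (classical_geom 2 two_ne_zero), ?_⟩
  exact h _ (classical_geom (1 / 2) (by norm_num))
end

section
/- Let B be a simple set of polynomials. The following are equivalent: (i) there exists α > 1 such that {α^k} and {(1/α)^k} are both B-multiplier sequences; (ii) for every α > 1, both {α^k} and {(1/α)^k} are B-multiplier sequences. -/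
open Polynomial Finset

noncomputable def mpoly (N : ℕ) (f : ℕ → ℝ) : ℝ[X] := ∑ k ∈ Finset.range N, C (f k) * X ^ k

lemma mpoly_coeff (N : ℕ) (f : ℕ → ℝ) (j : ℕ) :
    (mpoly N f).coeff j = if j < N then f j else 0 := by
  unfold mpoly
  rw [finset_sum_coeff]
  simp only [coeff_C_mul, coeff_X_pow, mul_ite, mul_one, mul_zero]
  by_cases hj : j < N
  · rw [if_pos hj, Finset.sum_eq_single j]
    · simp
    · intro i _ hij; simp [Ne.symm hij]
    · intro h; exact absurd (Finset.mem_range.mpr hj) h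
  · rw [if_neg hj]
    apply Finset.sum_eq_zero
    intro i hi
    have hne : j ≠ i := by simp only [Finset.mem_range] at hi; omega
    simp [hne]

lemma mpoly_natDegree_le (N : ℕ) (f : ℕ → ℝ) : (mpoly N f).natDegree ≤ N := by
  apply natDegree_le_iff_coeff_eq_zero.mpr
  intro j hj
  rw [mpoly_coeff]
  simp only [ite_eq_right_iff]
  intro h; omega

lemma mpoly_monic (N : ℕ) (f : ℕ → ℝ) (hf : f N = 1) :
    (mpoly (N + 1) f).Monic ∧ (mpoly (N + 1) f).natDegree = N := by
  have h1 : (mpoly (N + 1) f).coeff N = 1 := by rw [mpoly_coeff]; simp [hf]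
  have h2 : (mpoly (N + 1) f).natDegree ≤ N := by
    apply natDegree_le_iff_coeff_eq_zero.mpr
    intro j hj; rw [mpoly_coeff]; simp only [ite_eq_right_iff]; intro h; omega
  refine ⟨monic_of_natDegree_le_of_coeff_eq_one N h2 h1, le_antisymm h2 ?_⟩
  apply le_natDegree_of_ne_zero
  rw [h1]; exact one_ne_zero

lemma mpoly_comp_scale (N : ℕ) (f : ℕ → ℝ) (t : ℝ) :
    (mpoly N f).comp (C t * X + C 0) = mpoly N (fun k => f k * t ^ k) := by
  unfold mpoly
  rw [Polynomial.sum_comp]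
  apply Finset.sum_congr rfl
  intro k _
  rw [mul_comp, C_comp, pow_comp, X_comp]
  rw [map_zero, add_zero, mul_pow, ← C_pow, ← mul_assoc, mul_comm (C (f k)) (C (t ^ k)),
    ← C_mul, mul_comm (t ^ k) (f k)]

lemma C_mul_mpoly (u : ℝ) (N : ℕ) (f : ℕ → ℝ) :
    C u * mpoly N f = mpoly N (fun k => u * f k) := by
  unfold mpoly
  rw [Finset.mul_sum]
  apply Finset.sum_congr rfl
  intro k _
  rw [← mul_assoc, ← C_mul]

lemma mpoly_self (p : ℝ[X]) (N : ℕ) (h : p.natDegree < N) : p = mpoly N (fun j => p.coeff j) := by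
  conv_lhs => rw [p.as_sum_range' N h]
  unfold mpoly
  apply Finset.sum_congr rfl
  intro k _
  rw [C_mul_X_pow_eq_monomial]

lemma aeval_affine (z : ℂ) (u v : ℝ) :
    aeval z ((C u : ℝ[X]) * X + C v) = (u : ℂ) * z + (v : ℂ) := by
  simp

lemma im_affine (z : ℂ) (u v : ℝ) : ((u : ℂ) * z + (v : ℂ)).im = u * z.im := by
  simp [Complex.add_im, Complex.mul_im]

lemma rr_comp {q : ℝ[X]} (u v : ℝ) (hu : u ≠ 0) (h : RealRooted q) :
    RealRooted (q.comp (C u * X + C v)) := by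
  rcases h with h | h
  · left; rw [h, zero_comp]
  · right
    intro z hz
    rw [aeval_comp] at hz
    have h2 := h _ hz
    rw [aeval_affine, im_affine] at h2
    exact (mul_eq_zero.mp h2).resolve_left hu

lemma affine_comp_affine (u v : ℝ) (hu : u ≠ 0) :
    ((C u : ℝ[X]) * X + C v).comp (C u⁻¹ * X + C (-v / u)) = X := by
  simp only [add_comp, mul_comp, C_comp, X_comp, mul_add, ← mul_assoc, ← C_mul]
  rw [mul_inv_cancel₀ hu]
  rw [show u * (-v / u) = -v by field_simp]
  simp

lemma rr_comp_iff (q : ℝ[X]) (u v : ℝ) (hu : u ≠ 0) :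
    RealRooted (q.comp (C u * X + C v)) ↔ RealRooted q := by
  constructor
  · intro h
    have key : (q.comp (C u * X + C v)).comp (C u⁻¹ * X + C (-v / u)) = q := by
      rw [comp_assoc, affine_comp_affine u v hu, comp_X]
    have h2 := rr_comp u⁻¹ (-v / u) (inv_ne_zero hu) h
    rwa [key] at h2
  · exact rr_comp u v hu

lemma key_step (B' : ℕ → Polynomial ℝ) (hB' : SimpleSet B') (m : ℕ)
    (c : ℕ → ℝ) (hc : ∀ i < m, c i ≠ 0) (hBc : ∀ i < m, B' i = C (c i) * X ^ i)
    (t : ℝ) (ht : t ≠ 0) (hMS : IsMultSeq B' (fun k => t ^ k))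
    (P : ℕ → ℝ) (hPm : P m = 1)
    (hRR : RealRooted (mpoly (m + 1) P)) :
    RealRooted (mpoly (m + 1) (fun k =>
      P k + (if k = m then 0 else (B' m).coeff k / (B' m).coeff m * (t ^ (m - k) - 1)))) := by
  set b := B' m with hb
  set c' := b.coeff m with hc'
  have hbdeg : b.natDegree = m := natDegree_eq_of_degree_eq_some (hB' m)
  have hc'ne : c' ≠ 0 := coeff_ne_zero_of_eq_degree (hB' m)
  set a : ℕ → ℝ := fun k => if k = m then 1 / c' else (P k - b.coeff k / c') / c k with ha
  have hbm : b = mpoly (m + 1) (fun j => b.coeff j) := mpoly_self b (m + 1) (by omega)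
  have E1 : (∑ k ∈ Finset.range (m + 1), C (a k) * B' k) = mpoly (m + 1) P := by
    rw [Finset.sum_range_succ]
    have hrest : (∑ k ∈ Finset.range m, C (a k) * B' k) = mpoly m (fun k => a k * c k) := by
      unfold mpoly
      apply Finset.sum_congr rfl
      intro k hk
      rw [Finset.mem_range] at hk
      rw [hBc k hk, ← mul_assoc, ← C_mul]
    have htop : C (a m) * B' m = mpoly (m + 1) (fun j => a m * b.coeff j) := by
      rw [← hb]
      conv_lhs => rw [hbm]
      rw [C_mul_mpoly]
    rw [hrest, htop]
    apply Polynomial.ext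
    intro j
    rw [coeff_add]
    simp only [mpoly_coeff]
    rcases lt_trichotomy j m with hj | hj | hj
    · rw [if_pos hj, if_pos (by omega), if_pos (by omega)]
      simp only [ha, if_neg (Nat.ne_of_lt hj), if_pos rfl]
      rw [div_mul_cancel₀ _ (hc j hj)]
      field_simp
      ring
    · subst hj
      rw [if_neg (lt_irrefl j), if_pos (by omega), if_pos (by omega)]
      simp only [ha, if_pos rfl]
      rw [← hc', hPm]
      field_simp
      ring
    · rw [if_neg (by omega), if_neg (by omega), if_neg (by omega)]
      simp
  have E2 : (∑ k ∈ Finset.range (m + 1), C (a k * t ^ k) * B' k)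
      = mpoly (m + 1) (fun k =>
        (P k + (if k = m then 0 else b.coeff k / c' * (t ^ (m - k) - 1))) * t ^ k) := by
    rw [Finset.sum_range_succ]
    have hrest : (∑ k ∈ Finset.range m, C (a k * t ^ k) * B' k)
        = mpoly m (fun k => a k * t ^ k * c k) := by
      unfold mpoly
      apply Finset.sum_congr rfl
      intro k hk
      rw [Finset.mem_range] at hk
      rw [hBc k hk, ← mul_assoc, ← C_mul]
    have htop : C (a m * t ^ m) * B' m = mpoly (m + 1) (fun j => a m * t ^ m * b.coeff j) := by
      rw [← hb]
      conv_lhs => rw [hbm]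
      rw [C_mul_mpoly]
    rw [hrest, htop]
    apply Polynomial.ext
    intro j
    rw [coeff_add]
    simp only [mpoly_coeff]
    rcases lt_trichotomy j m with hj | hj | hj
    · rw [if_pos hj, if_pos (by omega), if_pos (by omega)]
      simp only [ha, if_neg (Nat.ne_of_lt hj), if_pos rfl]
      have hpow : t ^ (m - j) * t ^ j = t ^ m := by rw [← pow_add]; congr 1; omega
      rw [mul_right_comm, div_mul_cancel₀ _ (hc j hj)]
      linear_combination (-(b.coeff j) / c') * hpow
    · subst hj
      rw [if_neg (lt_irrefl j), if_pos (by omega), if_pos (by omega)]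
      simp only [ha, if_pos rfl]
      rw [← hc', hPm]
      field_simp
      simp
    · rw [if_neg (by omega), if_neg (by omega), if_neg (by omega)]
      simp
  have h1 := hMS m a (by rw [E1]; exact hRR)
  simp only [] at h1
  rw [E2] at h1
  have h2 := mpoly_comp_scale (m + 1) (fun k =>
      P k + (if k = m then 0 else b.coeff k / c' * (t ^ (m - k) - 1))) t
  rw [← h2, rr_comp_iff _ t 0 ht] at h1
  exact h1

lemma esymm_one' (S : Multiset ℝ) : S.esymm 1 = S.sum := by
  rw [Multiset.esymm, Multiset.powersetCard_one, Multiset.map_map]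
  simp

lemma esymm_cons_two (a : ℝ) (S : Multiset ℝ) :
    (a ::ₘ S).esymm 2 = S.esymm 2 + a * S.sum := by
  rw [Multiset.esymm, Multiset.powersetCard_cons, Multiset.map_add, Multiset.sum_add,
    Multiset.map_map]
  congr 1
  have : ∀ t : Multiset ℝ, (Multiset.prod ∘ (a ::ₘ ·)) t = a * t.prod := by
    intro t; simp [Multiset.prod_cons]
  rw [Multiset.map_congr rfl (fun t _ => this t)]
  rw [Multiset.sum_map_mul_left, ← esymm_one' S, Multiset.esymm]

lemma sq_sum_multiset (S : Multiset ℝ) :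
    S.sum ^ 2 = 2 * S.esymm 2 + (S.map (fun r => r ^ 2)).sum := by
  induction S using Multiset.induction with
  | empty => simp [Multiset.esymm, show Multiset.powersetCard 2 (0 : Multiset ℝ) = 0 from Multiset.powersetCard_zero_right 1]
  | cons a S ih =>
    rw [Multiset.sum_cons, Multiset.map_cons, Multiset.sum_cons, esymm_cons_two]
    linear_combination ih

lemma ofReal_msum (T : Multiset ℝ) : ((T.sum : ℝ) : ℂ) = (T.map (fun x : ℝ => (x : ℂ))).sum := by
  induction T using Multiset.induction <;> simp_all

lemma ofReal_mprod (T : Multiset ℝ) : ((T.prod : ℝ) : ℂ) = (T.map (fun x : ℝ => (x : ℂ))).prod := by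
  induction T using Multiset.induction <;> simp_all

lemma multiset_sum_sq_nonneg (S : Multiset ℝ) : 0 ≤ (S.map fun r => r ^ 2).sum := by
  apply Multiset.sum_nonneg
  intro x hx
  obtain ⟨y, _, rfl⟩ := Multiset.mem_map.mp hx
  positivity

lemma multiset_sum_sq_zero {S : Multiset ℝ} (h : (S.map fun r => r ^ 2).sum = 0) :
    ∀ x ∈ S, x = 0 := by
  induction S using Multiset.induction with
  | empty => simp
  | cons a S ih =>
    rw [Multiset.map_cons, Multiset.sum_cons] at h
    have hnn := multiset_sum_sq_nonneg S
    have ha : a = 0 := by nlinarith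
    intro x hx
    rcases Multiset.mem_cons.mp hx with rfl | hx
    · exact ha
    · exact ih (by nlinarith) x hx

lemma key_ineq (n : ℕ) (q : ℝ[X]) (hm : q.Monic) (hdeg : q.natDegree = n + 2)
    (hrr : RealRooted q) :
    0 ≤ (q.coeff (n + 1)) ^ 2 - 2 * q.coeff n ∧
      (q.coeff (n + 1) = 0 → q.coeff n = 0 → q = X ^ (n + 2)) := by
  have hq0 : q ≠ 0 := hm.ne_zero
  set Q := q.map (algebraMap ℝ ℂ) with hQdef
  have hQm : Q.Monic := hm.map _
  have hQdeg : Q.natDegree = n + 2 := by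
    rw [hQdef, natDegree_map_eq_of_injective (algebraMap ℝ ℂ).injective, hdeg]
  have hsplit : Q.Splits := IsAlgClosed.splits Q
  have hcard : Multiset.card Q.roots = n + 2 := by
    rw [splits_iff_card_roots.mp hsplit, hQdeg]
  have hreal : ∀ r ∈ Q.roots, r.im = 0 := by
    intro r hr
    have hroot : aeval r q = 0 := by
      have h1 : eval r Q = 0 := isRoot_of_mem_roots hr
      rwa [hQdef, eval_map, ← aeval_def] at h1
    rcases hrr with h | h
    · exact absurd h hq0
    · exact h r hroot
  set S : Multiset ℝ := Q.roots.map Complex.re with hS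
  have hmapS : S.map (fun x : ℝ => (x : ℂ)) = Q.roots := by
    rw [hS, Multiset.map_map]
    conv_rhs => rw [← Multiset.map_id Q.roots]
    apply Multiset.map_congr rfl
    intro r hr
    exact Complex.ext (by simp) (by simp [hreal r hr])
  have hScard : Multiset.card S = n + 2 := by rw [hS, Multiset.card_map, hcard]
  have hprod : Q = (Q.roots.map fun a => X - C a).prod :=
    (prod_multiset_X_sub_C_of_monic_of_roots_card_eq hQm (splits_iff_card_roots.mp hsplit)).symm
  have hesymm : ∀ k, Q.roots.esymm k = ((S.esymm k : ℝ) : ℂ) := by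
    intro k
    rw [← hmapS, Multiset.esymm, Multiset.esymm, Multiset.powersetCard_map, Multiset.map_map,
      ofReal_msum, Multiset.map_map]
    apply congrArg
    apply Multiset.map_congr rfl
    intro t _
    simp [Function.comp, ofReal_mprod]
  have hco : ∀ k, k ≤ n + 2 →
      ((q.coeff k : ℝ) : ℂ) = (-1 : ℂ) ^ (n + 2 - k) * ((S.esymm (n + 2 - k) : ℝ) : ℂ) := by
    intro k hk
    have hv := Multiset.prod_X_sub_C_coeff Q.roots (show k ≤ Multiset.card Q.roots by rw [hcard]; exact hk)
    rw [← hprod, hcard] at hv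
    have hc : Q.coeff k = ((q.coeff k : ℝ) : ℂ) := by
      rw [hQdef, coeff_map, Complex.coe_algebraMap]
    rw [hc, hesymm] at hv
    exact hv
  have h1 : q.coeff (n + 1) = -S.sum := by
    have h := hco (n + 1) (by omega)
    rw [show n + 2 - (n + 1) = 1 by omega, esymm_one', pow_one] at h
    have : ((q.coeff (n + 1) : ℝ) : ℂ) = ((-S.sum : ℝ) : ℂ) := by rw [h]; push_cast; ring
    exact_mod_cast this
  have h2 : q.coeff n = S.esymm 2 := by
    have h := hco n (by omega)
    rw [show n + 2 - n = 2 by omega] at h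
    have : ((q.coeff n : ℝ) : ℂ) = ((S.esymm 2 : ℝ) : ℂ) := by rw [h]; push_cast; ring
    exact_mod_cast this
  refine ⟨?_, ?_⟩
  · rw [h1, h2]
    have hs := sq_sum_multiset S
    have hnn := multiset_sum_sq_nonneg S
    nlinarith [hs, hnn]
  · intro hz1 hz2
    have hsum0 : S.sum = 0 := by rw [h1] at hz1; linarith
    have he2 : S.esymm 2 = 0 := by rw [← h2]; exact hz2
    have hsq : (S.map fun r => r ^ 2).sum = 0 := by
      have h := sq_sum_multiset S; rw [hsum0, he2] at h; linarith
    have hall := multiset_sum_sq_zero hsq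
    have hSrep : S = Multiset.replicate (n + 2) 0 := Multiset.eq_replicate.mpr ⟨hScard, hall⟩
    have hQX : Q = X ^ (n + 2) := by
      rw [hprod, ← hmapS, hSrep]
      simp [Multiset.map_replicate, Multiset.prod_replicate]
      ring
    have hinj : Function.Injective (Polynomial.map (algebraMap ℝ ℂ)) :=
      Polynomial.map_injective _ (algebraMap ℝ ℂ).injective
    apply hinj
    rw [Polynomial.map_pow, Polynomial.map_X, ← hQdef, hQX]

lemma rr_two_factors (a k : ℕ) (s : ℝ) : RealRooted (X ^ a * (X - C s) ^ k) := by
  right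
  intro z hz
  simp only [map_mul, map_pow, map_sub, aeval_X, aeval_C] at hz
  rcases mul_eq_zero.mp hz with h | h
  · have h1 := (pow_eq_zero_iff'.mp h).1
    simp [h1]
  · have h2 : z = algebraMap ℝ ℂ s := by
      have := (pow_eq_zero_iff'.mp h).1
      linear_combination this
    simp [h2, Complex.coe_algebraMap]

lemma mpoly_three (n : ℕ) (u w : ℝ) :
    mpoly (n + 3) (fun k =>
      if k = n + 2 then 1 else if k = n + 1 then u else if k = n then w else 0)
      = X ^ (n + 2) + C u * X ^ (n + 1) + C w * X ^ n := by
  apply Polynomial.ext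
  intro j
  rw [mpoly_coeff]
  simp only [coeff_add, coeff_C_mul, coeff_X_pow]
  by_cases h2 : j = n + 2
  · subst h2
    rw [if_pos (by omega), if_pos rfl, if_pos rfl, if_neg (by omega), if_neg (by omega)]
    ring
  · by_cases h1 : j = n + 1
    · subst h1
      rw [if_pos (by omega), if_neg h2, if_pos rfl, if_neg h2, if_pos rfl, if_neg (by omega)]
      simp
    · by_cases h0 : j = n
      · subst h0
        rw [if_pos (by omega), if_neg h2, if_neg h1, if_neg h2, if_neg h1, if_pos rfl]
        simp
      · simp [h2, h1, h0]

lemma struct (B' : ℕ → Polynomial ℝ) (hB' : SimpleSet B') (e : ℝ) (he : e ≠ 0)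
    (hB1 : B' 1 = C e * X)
    (α : ℝ) (hα : 1 < α) (hms1 : IsMultSeq B' (fun k => α ^ k))
    (hms2 : IsMultSeq B' (fun k => (1 / α) ^ k)) :
    ∀ m, ∃ c : ℝ, c ≠ 0 ∧ B' m = C c * X ^ m := by
  intro m
  induction m using Nat.strong_induction_on with
  | _ m IH =>
  match m, IH with
  | 0, _ =>
    refine ⟨(B' 0).coeff 0, coeff_ne_zero_of_eq_degree (hB' 0), ?_⟩
    have h0 := eq_C_of_degree_le_zero (le_of_eq (hB' 0))
    rw [h0]; simp
  | 1, _ => exact ⟨e, he, by rw [hB1, pow_one]⟩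
  | (n + 2), IH => ?_
  have hα0 : (0:ℝ) < α := by linarith
  have hαne : α ≠ 0 := ne_of_gt hα0
  have hch : ∀ i, ∃ ci : ℝ, i < n + 2 → (ci ≠ 0 ∧ B' i = C ci * X ^ i) := by
    intro i
    by_cases h : i < n + 2
    · obtain ⟨ci, h1, h2⟩ := IH i h
      exact ⟨ci, fun _ => ⟨h1, h2⟩⟩
    · exact ⟨1, fun h' => absurd h' h⟩
  choose c hcp using hch
  have hcne : ∀ i < n + 2, c i ≠ 0 := fun i hi => (hcp i hi).1
  have hcB : ∀ i < n + 2, B' i = C (c i) * X ^ i := fun i hi => (hcp i hi).2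
  set b := B' (n + 2) with hbdef
  set c' := b.coeff (n + 2) with hc'def
  have hc'ne : c' ≠ 0 := coeff_ne_zero_of_eq_degree (hB' (n + 2))
  have hbdeg : b.natDegree = n + 2 := natDegree_eq_of_degree_eq_some (hB' (n + 2))
  set D : ℝ → ℕ → ℝ :=
    fun t k => if k = n + 2 then 0 else b.coeff k / c' * (t ^ (n + 2 - k) - 1) with hD
  have hq : ∀ t, t ≠ 0 → IsMultSeq B' (fun k => t ^ k) → ∀ u w : ℝ,
      RealRooted (X ^ (n+2) + C u * X^(n+1) + C w * X^n) →
      RealRooted (mpoly (n + 3) (fun k =>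
        (if k = n + 2 then (1:ℝ) else if k = n + 1 then u else if k = n then w else 0)
          + D t k)) := by
    intro t ht hms u w hrr
    have h := key_step B' hB' (n + 2) c hcne hcB t ht hms
      (fun k => if k = n + 2 then (1:ℝ) else if k = n + 1 then u else if k = n then w else 0)
      (by simp) (by rw [show (n+2)+1 = n+3 from rfl, mpoly_three]; exact hrr)
    exact h
  have hQprop : ∀ t, t ≠ 0 → IsMultSeq B' (fun k => t ^ k) → ∀ u w : ℝ,
      RealRooted (X ^ (n+2) + C u * X^(n+1) + C w * X^n) →
      (0 ≤ (u + D t (n+1))^2 - 2*(w + D t n) ∧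
        (u + D t (n+1) = 0 → w + D t n = 0 → ∀ i, i < n + 2 →
          (if i = n + 2 then (1:ℝ) else if i = n + 1 then u else if i = n then w else 0)
            + D t i = 0)) := by
    intro t ht hms u w hrr
    have hq1 := hq t ht hms u w hrr
    set f : ℕ → ℝ := fun k =>
      (if k = n + 2 then (1:ℝ) else if k = n + 1 then u else if k = n then w else 0)
        + D t k with hf
    have hmon := mpoly_monic (n + 2) f (by simp [hf, hD])
    have hco1 : (mpoly (n+3) f).coeff (n+1) = u + D t (n+1) := by
      rw [mpoly_coeff, if_pos (by omega)]
      simp [hf, show ¬(n+1 = n+2) by omega]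
    have hco0 : (mpoly (n+3) f).coeff n = w + D t n := by
      rw [mpoly_coeff, if_pos (by omega)]
      simp [hf, show ¬(n = n+2) by omega, show ¬(n = n+1) by omega]
    obtain ⟨hI, hE⟩ := key_ineq n (mpoly (n+3) f) hmon.1 hmon.2 hq1
    constructor
    · rw [hco1, hco0] at hI; exact hI
    · intro h1 h2 i hi
      have hX := hE (by rw [hco1]; exact h1) (by rw [hco0]; exact h2)
      have hcoe := congrArg (fun p => Polynomial.coeff p i) hX
      rw [mpoly_coeff, if_pos (by omega), coeff_X_pow, if_neg (by omega)] at hcoe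
      exact hcoe
  have hDn : ∀ t : ℝ, D t n = b.coeff n / c' * (t^2 - 1) := by
    intro t
    rw [hD]
    simp only [if_neg (show n ≠ n+2 by omega), show n+2-n = 2 by omega]
  have hDn1 : ∀ t : ℝ, D t (n+1) = b.coeff (n+1) / c' * (t - 1) := by
    intro t
    rw [hD]
    simp only [if_neg (show n+1 ≠ n+2 by omega), show n+2-(n+1) = 1 by omega, pow_one]
  have hrrA : ∀ s : ℝ, RealRooted (X ^ (n+2) + C (-s) * X^(n+1) + C (0:ℝ) * X^n) := by
    intro s
    have h := rr_two_factors (n+1) 1 s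
    rwa [show X^(n+1) * (X - C s)^1 = X ^ (n+2) + C (-s) * X^(n+1) + C (0:ℝ) * X^n by
      rw [map_neg, map_zero]; ring] at h
  have hA : ∀ t, t ≠ 0 → IsMultSeq B' (fun k => t ^ k) → D t n ≤ 0 := by
    intro t ht hms
    have h := (hQprop t ht hms (-(D t (n+1))) 0 (hrrA _)).1
    nlinarith [h]
  have hbn : b.coeff n = 0 := by
    have h1 := hA α hαne hms1
    have h2 := hA (1/α) (by positivity) hms2
    rw [hDn] at h1 h2
    have e1 : (0:ℝ) < α^2 - 1 := by nlinarith
    have e2 : (1/α)^2 - 1 < 0 := by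
      have h3 : (1/α)^2 < 1 := by
        rw [div_pow, one_pow, div_lt_one (by positivity)]
        nlinarith
      linarith
    have hle : b.coeff n / c' ≤ 0 := by nlinarith
    have hge : 0 ≤ b.coeff n / c' := by nlinarith
    have hr0 : b.coeff n / c' = 0 := le_antisymm hle hge
    exact (div_eq_zero_iff.mp hr0).resolve_right hc'ne
  have hbi : ∀ i, i ≤ n → b.coeff i = 0 := by
    intro i hi
    have h := (hQprop α hαne hms1 (-(D α (n+1))) 0 (hrrA _)).2 (by ring)
      (by rw [hDn, hbn]; simp) i (by omega)
    rw [if_neg (show i ≠ n+2 by omega), if_neg (show i ≠ n+1 by omega), ite_self,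
      zero_add] at h
    simp only [hD] at h
    rw [if_neg (show i ≠ n+2 by omega)] at h
    have hpow : α ^ (n+2-i) - 1 ≠ 0 := by
      have hgt : 1 < α ^ (n+2-i) := one_lt_pow₀ hα (by omega)
      intro hcon; linarith
    rcases mul_eq_zero.mp h with h' | h'
    · exact (div_eq_zero_iff.mp h').resolve_right hc'ne
    · exact absurd h' hpow
  have hrrC : ∀ s : ℝ, RealRooted (X^(n+2) + C (-(2*s)) * X^(n+1) + C (s^2) * X^n) := by
    intro s
    have h := rr_two_factors n 2 s
    rwa [show X^n * (X - C s)^2 = X^(n+2) + C (-(2*s)) * X^(n+1) + C (s^2) * X^n by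
      rw [map_neg, map_mul, map_pow, map_ofNat]; ring] at h
  have hbn1 : b.coeff (n+1) = 0 := by
    set d := D α (n+1) with hdd
    have h := (hQprop α hαne hms1 (-(2*d)) (d^2) (hrrC d)).1
    have hDαn : D α n = 0 := by rw [hDn, hbn]; simp
    have hd2 : d^2 = 0 := le_antisymm (by nlinarith) (sq_nonneg d)
    have hd0 : d = 0 := by
      have := sq_eq_zero_iff.mp hd2
      exact this
    rw [hdd, hDn1] at hd0
    have hne : α - 1 ≠ 0 := by intro hcon; linarith
    rcases mul_eq_zero.mp hd0 with h' | h'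
    · exact (div_eq_zero_iff.mp h').resolve_right hc'ne
    · exact absurd h' hne
  refine ⟨c', hc'ne, ?_⟩
  apply Polynomial.ext
  intro j
  rw [coeff_C_mul, coeff_X_pow]
  rcases lt_trichotomy j (n+2) with hj | hj | hj
  · rw [if_neg (by omega), mul_zero]
    by_cases hjn : j ≤ n
    · exact hbi j hjn
    · have hj1 : j = n+1 := by omega
      rw [hj1]; exact hbn1
  · rw [hj, if_pos rfl, mul_one]
  · rw [if_neg (by omega), mul_zero]
    exact coeff_eq_zero_of_natDegree_lt (by rw [hbdeg]; omega)

lemma ms_comp (B : ℕ → Polynomial ℝ) (γ : ℕ → ℝ) (u v : ℝ) (hu : u ≠ 0)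
    (h : IsMultSeq B γ) : IsMultSeq (fun k => (B k).comp (C u * X + C v)) γ := by
  intro n a hrr
  have e1 : ∀ (d : ℕ → ℝ), (∑ k ∈ Finset.range (n+1), C (d k) * (B k).comp (C u * X + C v))
      = (∑ k ∈ Finset.range (n+1), C (d k) * B k).comp (C u * X + C v) := by
    intro d
    rw [Polynomial.sum_comp]
    apply Finset.sum_congr rfl
    intro k _
    rw [mul_comp, C_comp]
  simp only [] at hrr ⊢
  rw [e1, rr_comp_iff _ u v hu] at hrr
  have h2 := h n a hrr
  rw [← rr_comp_iff _ u v hu, ← e1] at h2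
  exact h2

lemma simple_comp (B : ℕ → Polynomial ℝ) (hB : SimpleSet B) (v : ℝ) :
    SimpleSet (fun k => (B k).comp (C 1 * X + C v)) := by
  intro k
  simp only []
  have h1 : (C 1 * X + C v : ℝ[X]) = X + C v := by rw [map_one, one_mul]
  rw [h1]
  have hnz : B k ≠ 0 := by
    intro h0
    have := hB k
    rw [h0, degree_zero] at this
    exact absurd this (by simp)
  have hnd : ((B k).comp (X + C v)).natDegree = k := by
    rw [natDegree_comp, natDegree_X_add_C, mul_one, natDegree_eq_of_degree_eq_some (hB k)]
  have hne : (B k).comp (X + C v) ≠ 0 := by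
    intro h0
    have hcc : (X + C v : ℝ[X]).comp (X + C (-v)) = X := by
      rw [add_comp, X_comp, C_comp, map_neg]; ring
    have h3 : ((B k).comp (X + C v)).comp (X + C (-v)) = B k := by
      rw [comp_assoc, hcc, comp_X]
    rw [h0, zero_comp] at h3
    exact hnz h3.symm
  rw [degree_eq_natDegree hne, hnd]

theorem stmt_5 (B : ℕ → Polynomial ℝ) (hB : SimpleSet B) :
    (∃ α : ℝ, 1 < α ∧ IsMultSeq B (fun k => α ^ k) ∧
        IsMultSeq B (fun k => (1 / α) ^ k)) ↔
    (∀ α : ℝ, 1 < α → IsMultSeq B (fun k => α ^ k) ∧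
        IsMultSeq B (fun k => (1 / α) ^ k)) := by
  constructor
  · rintro ⟨α, hα, h1, h2⟩ β hβ
    set e := (B 1).coeff 1 with hedef
    set f0 := (B 1).coeff 0 with hf0def
    have he : e ≠ 0 := by
      have : (B 1).degree = (1 : ℕ) := hB 1
      exact coeff_ne_zero_of_eq_degree this
    have hB1eq : B 1 = C e * X + C f0 := by
      have hle : (B 1).degree ≤ 1 := le_of_eq (hB 1)
      exact eq_X_add_C_of_degree_le_one hle
    set v := -f0 / e with hv
    set B' : ℕ → ℝ[X] := fun k => (B k).comp (C 1 * X + C v) with hB'def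
    have hB'simple : SimpleSet B' := simple_comp B hB v
    have hB'1 : B' 1 = C e * X := by
      rw [hB'def]
      simp only []
      rw [hB1eq, add_comp, mul_comp, C_comp, X_comp, C_comp, map_one, one_mul]
      have hre : C e * (X + C v) + C f0 = C e * X + (C (e * v + f0)) := by
        rw [C_add, C_mul]; ring
      rw [hre]
      have hzero : e * v + f0 = 0 := by rw [hv]; field_simp; ring
      rw [hzero, map_zero, add_zero]
    have hm1 : IsMultSeq B' (fun k => α ^ k) := ms_comp B _ 1 v one_ne_zero h1
    have hm2 : IsMultSeq B' (fun k => (1/α) ^ k) := ms_comp B _ 1 v one_ne_zero h2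
    have hstr := struct B' hB'simple e he hB'1 α hα hm1 hm2
    choose cc hcc using hstr
    have hrecover : ∀ k, B k = (B' k).comp (C 1 * X + C (-v)) := by
      intro k
      rw [hB'def]
      simp only []
      rw [comp_assoc]
      have hcc2 : (C (1:ℝ) * X + C v).comp (C 1 * X + C (-v)) = X := by
        rw [map_one, one_mul, add_comp, X_comp, C_comp, map_neg]
        ring
      rw [hcc2, comp_X]
    have hBk : ∀ k, B k = C (cc k) * (X + C (-v)) ^ k := by
      intro k
      rw [hrecover k, (hcc k).2, mul_comp, C_comp, pow_comp, X_comp, map_one, one_mul]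
    have hfin : ∀ t : ℝ, t ≠ 0 → IsMultSeq B (fun k => t ^ k) := by
      intro t ht nn a hrr
      simp only []
      have hP : (∑ k ∈ Finset.range (nn+1), C (a k * t ^ k) * B k)
          = (∑ k ∈ Finset.range (nn+1), C (a k) * B k).comp
              (C t * X + C (t * (-v) - (-v))) := by
        rw [Polynomial.sum_comp]
        apply Finset.sum_congr rfl
        intro k _
        rw [hBk k, mul_comp, C_comp, mul_comp, C_comp, pow_comp, add_comp, X_comp, C_comp]
        have harg : (C t * X + C (t * (-v) - (-v))) + C (-v) = C t * (X + C (-v)) := by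
          rw [add_assoc, ← C_add, show t * (-v) - (-v) + (-v) = t * (-v) by ring, C_mul]
          ring
        rw [harg, mul_pow, ← C_pow, C_mul]
        ring
      rw [hP]
      exact rr_comp t _ ht hrr
    have hβ0 : β ≠ 0 := by intro h0; rw [h0] at hβ; linarith
    exact ⟨hfin β hβ0, hfin (1/β) (by positivity)⟩
  · intro h
    exact ⟨2, one_lt_two, h 2 one_lt_two⟩
end

section
/- Suppose {γ_k} is a classical multiplier sequence with γ_1/γ_0 = γ_2/γ_1 = α for some real α (in particular γ_0 ≠ 0 and γ_1 ≠ 0). Then γ_n = γ_0 α^n for all n ≥ 0. -/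
open Polynomial

noncomputable def bb (m : ℕ) : ℕ → ℝ := fun j =>
  if j = m then (1:ℝ) else if j = m+1 then 3 else if j = m+2 then 3 else if j = m+3 then 1 else 0

lemma sum_explicit (m : ℕ) (c : ℕ → ℝ) :
    ∑ j ∈ Finset.range (m+4), C (bb m j * c j) * X^j
    = C (c m) * X^m + C (3 * c (m+1)) * X^(m+1) + C (3 * c (m+2)) * X^(m+2) + C (c (m+3)) * X^(m+3) := by
  rw [Finset.sum_range_succ, Finset.sum_range_succ, Finset.sum_range_succ, Finset.sum_range_succ]
  rw [Finset.sum_eq_zero (fun j hj => by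
    simp only [Finset.mem_range] at hj
    rw [bb, if_neg (by omega), if_neg (by omega), if_neg (by omega), if_neg (by omega)]
    simp)]
  rw [bb, bb, bb, bb]
  rw [if_pos rfl, if_neg (by omega), if_pos rfl, if_neg (by omega), if_neg (by omega), if_pos rfl,
    if_neg (by omega), if_neg (by omega), if_neg (by omega), if_pos rfl]
  ring

lemma cubic_core (u g α r s w : ℝ) (hg : g ≠ 0)
    (E0 : g = u * (0-r)*(0-s)*(0-w))
    (E1 : u + 3*(g*α^2) + 3*(g*α) + g = u * (1-r)*(1-s)*(1-w))
    (Em1 : -u + 3*(g*α^2) - 3*(g*α) + g = u * (-1-r)*(-1-s)*(-1-w)) :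
    u = g * α^3 := by
  have h3 : u * (r*s*w) = -g := by linear_combination E0
  have h1 : u * (r+s+w) = -(3*(g*α^2)) := by linear_combination (E1 + Em1)/2 - E0
  have h2 : u * (r*s + s*w + r*w) = 3*(g*α) := by linear_combination (Em1 - E1)/2
  have key : u^4 * ((r-s)^2*(s-w)^2*(r-w)^2) = -27*g^2*(u - g*α^3)^2 := by
    linear_combination
      ((u*(r+s+w) - 3*(g*α^2))*(u*(r*s+s*w+r*w))^2
        - 4*((u*(r+s+w))^2 - 3*(g*α^2)*(u*(r+s+w)) + 9*(g*α^2)^2)*(u*(r*s*w))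
        + 18*u*(u*(r*s+s*w+r*w))*(u*(r*s*w))) * h1
      + (9*(g*α^2)^2*((u*(r*s+s*w+r*w)) + 3*(g*α))
        - 4*u*((u*(r*s+s*w+r*w))^2 + 3*(g*α)*(u*(r*s+s*w+r*w)) + 9*(g*α)^2)
        - 54*u*(g*α^2)*(u*(r*s*w))) * h2
      + (108*(g*α^2)^3 - 162*u*(g*α^2)*(g*α) - 27*u^2*((u*(r*s*w)) - g)) * h3
  have hsq : 0 ≤ u^4 * ((r-s)^2*(s-w)^2*(r-w)^2) := by positivity
  have hgg : 0 < g^2 := by positivity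
  have h5 : (u - g*α^3)^2 ≤ 0 := by nlinarith [hsq, key, hgg]
  have h6 : u - g*α^3 = 0 := by nlinarith [sq_nonneg (u - g*α^3)]
  linarith

lemma cubic_factor (u b2 b1 b0 : ℝ) (hu : u ≠ 0)
    (H : ∀ z : ℂ, (u:ℂ)*z^3 + (b2:ℂ)*z^2 + (b1:ℂ)*z + (b0:ℂ) = 0 → z.im = 0) :
    ∃ r s w : ℝ, ∀ t : ℝ, u*t^3 + b2*t^2 + b1*t + b0 = u*(t-r)*(t-s)*(t-w) := by
  set p : ℂ[X] := C (u:ℂ) * X^3 + C (b2:ℂ) * X^2 + C (b1:ℂ) * X + C (b0:ℂ) with hp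
  have hu' : (u:ℂ) ≠ 0 := by exact_mod_cast hu
  have hdeg : p.natDegree = 3 := natDegree_cubic hu'
  have hsplits : Splits p := IsAlgClosed.splits p
  have hcard : Multiset.card p.roots = 3 := by
    rw [splits_iff_card_roots.mp hsplits, hdeg]
  obtain ⟨z1, z2, z3, hz⟩ := Multiset.card_eq_three.mp hcard
  have hfac : p = C p.leadingCoeff * (p.roots.map fun a => X - C a).prod :=
    hsplits.eq_prod_roots
  have hlc : p.leadingCoeff = (u:ℂ) := by
    rw [leadingCoeff, hdeg, hp]
    simp [coeff_C, coeff_X_pow]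
  have hroot : ∀ z ∈ p.roots, z.im = 0 := by
    intro z hzr
    have h2 := isRoot_of_mem_roots hzr
    apply H
    simp only [IsRoot, hp, eval_add, eval_mul, eval_pow, eval_C, eval_X] at h2
    linear_combination h2
  have h1 : z1.im = 0 := hroot z1 (by rw [hz]; simp)
  have h2 : z2.im = 0 := hroot z2 (by rw [hz]; simp)
  have h3 : z3.im = 0 := hroot z3 (by rw [hz]; simp)
  have e1 : (z1.re : ℂ) = z1 := Complex.conj_eq_iff_re.mp (Complex.conj_eq_iff_im.mpr h1)
  have e2 : (z2.re : ℂ) = z2 := Complex.conj_eq_iff_re.mp (Complex.conj_eq_iff_im.mpr h2)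
  have e3 : (z3.re : ℂ) = z3 := Complex.conj_eq_iff_re.mp (Complex.conj_eq_iff_im.mpr h3)
  refine ⟨z1.re, z2.re, z3.re, fun t => ?_⟩
  have hev := congrArg (eval (t:ℂ)) hfac
  rw [hz, hlc] at hev
  rw [show ({z1, z2, z3} : Multiset ℂ) = z1 ::ₘ z2 ::ₘ {z3} from rfl] at hev
  simp only [Multiset.map_cons, Multiset.prod_cons, Multiset.map_singleton,
    Multiset.prod_singleton, eval_mul, eval_sub, eval_C, eval_X, hp, eval_add, eval_pow] at hev
  rw [← e1, ← e2, ← e3] at hev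
  have hev2 : u * t ^ 3 + b2 * t ^ 2 + b1 * t + b0 = u * ((t - z1.re) * ((t - z2.re) * (t - z3.re))) := by exact_mod_cast hev
  exact hev2.trans (by ring)

lemma step (γ : ℕ → ℝ) (hγ : ClassicalMS γ) (α g : ℝ) (m : ℕ) (hg : g ≠ 0) (hα : α ≠ 0)
    (hm : γ m = g) (hm1 : γ (m+1) = g*α) (hm2 : γ (m+2) = g*α^2) :
    γ (m+3) = g * α^3 := by
  set u := γ (m+3) with hu_def
  -- the input polynomial X^m (X+1)^3 is real rooted
  have hin : RealRooted (∑ k ∈ Finset.range (m+3+1), C (bb m k) * (fun k => (X:ℝ[X])^k) k) := by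
    right
    intro z hz
    have hS : (∑ k ∈ Finset.range (m+3+1), C (bb m k) * (fun k => (X:ℝ[X])^k) k)
        = C 1 * X^m + C 3 * X^(m+1) + C 3 * X^(m+2) + C 1 * X^(m+3) := by
      have := sum_explicit m (fun _ => (1:ℝ))
      simpa using this
    rw [hS] at hz
    simp only [map_add, map_mul, aeval_C, map_pow, aeval_X, map_one, map_ofNat] at hz
    have hz' : z^m * (z+1)^3 = 0 := by rw [← hz]; push_cast; ring
    rcases mul_eq_zero.mp hz' with h | h
    · rw [(pow_eq_zero_iff'.mp h).1]; rfl
    · rw [eq_neg_of_add_eq_zero_left (pow_eq_zero_iff (n := 3) (by norm_num) |>.mp h)]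
      simp
  have hout := hγ (m+3) (bb m) hin
  have hQ : (∑ k ∈ Finset.range (m+3+1), C (bb m k * γ k) * (fun k => (X:ℝ[X])^k) k)
      = C g * X^m + C (3*(g*α)) * X^(m+1) + C (3*(g*α^2)) * X^(m+2) + C u * X^(m+3) := by
    have := sum_explicit m γ
    simp only [hm, hm1, hm2, ← hu_def] at this
    exact this
  rw [hQ] at hout
  -- the output polynomial is nonzero (coefficient at m is g)
  have hQne : C g * X^m + C (3*(g*α)) * X^(m+1) + C (3*(g*α^2)) * X^(m+2) + C u * X^(m+3) ≠ 0 := by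
    intro hc
    have := congrArg (fun p => coeff p m) hc
    simp only [coeff_add, coeff_C_mul, coeff_X_pow, coeff_zero] at this
    simp only [(by omega : ¬ (m = m+1)), (by omega : ¬ (m = m+2)), (by omega : ¬ (m = m+3)),
      if_true, if_false, eq_self_iff_true] at this
    simp at this
    exact hg this
  have hroots : ∀ z : ℂ, Polynomial.aeval z
      (C g * X^m + C (3*(g*α)) * X^(m+1) + C (3*(g*α^2)) * X^(m+2) + C u * X^(m+3)) = 0 → z.im = 0 := by
    rcases hout with h | h
    · exact absurd h hQne
    · exact h
  -- roots of the cubic are real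
  have H : ∀ z : ℂ, (u:ℂ)*z^3 + ((3*(g*α^2):ℝ):ℂ)*z^2 + ((3*(g*α):ℝ):ℂ)*z + ((g:ℝ):ℂ) = 0 → z.im = 0 := by
    intro z hz
    apply hroots z
    have expand : (aeval z) (C g * X^m + C (3*(g*α)) * X^(m+1) + C (3*(g*α^2)) * X^(m+2) + C u * X^(m+3))
        = z^m * ((u:ℂ)*z^3 + ((3*(g*α^2):ℝ):ℂ)*z^2 + ((3*(g*α):ℝ):ℂ)*z + ((g:ℝ):ℂ)) := by
      simp only [map_add, map_mul, aeval_C, map_pow, aeval_X, Complex.coe_algebraMap]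
      push_cast; ring
    rw [expand, hz, mul_zero]
  -- u ≠ 0
  have hu : u ≠ 0 := by
    intro hu0
    set q := Real.sqrt 3 with hq_def
    have hq : q^2 = 3 := Real.sq_sqrt (by norm_num)
    have hq' : ((q:ℂ))^2 = 3 := by exact_mod_cast hq
    set y0 : ℂ := -(1:ℂ)/2 + (q:ℂ)/6 * Complex.I with hy0
    have hy : 3*y0^2 + 3*y0 + 1 = 0 := by
      rw [hy0]
      linear_combination ((q:ℂ)^2/12) * Complex.I_sq - (1/12) * hq'
    set z0 : ℂ := ((1/α : ℝ):ℂ) * y0 with hz0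
    have hα' : (α:ℂ) ≠ 0 := by exact_mod_cast hα
    have hcub : (u:ℂ)*z0^3 + ((3*(g*α^2):ℝ):ℂ)*z0^2 + ((3*(g*α):ℝ):ℂ)*z0 + ((g:ℝ):ℂ) = 0 := by
      have heq : (u:ℂ)*z0^3 + ((3*(g*α^2):ℝ):ℂ)*z0^2 + ((3*(g*α):ℝ):ℂ)*z0 + ((g:ℝ):ℂ)
          = ((g:ℂ)) * (3*y0^2 + 3*y0 + 1) := by
        rw [hu0, hz0]
        push_cast
        field_simp
        ring
      rw [heq, hy, mul_zero]
    have him := H z0 hcub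
    have him2 : z0.im = (1/α) * (q/6) := by
      rw [hz0, hy0]
      simp [Complex.mul_im]
    rw [him2] at him
    rcases mul_eq_zero.mp him with h | h
    · exact one_div_ne_zero hα h
    · have hqpos : 0 < q := Real.sqrt_pos.mpr (by norm_num)
      linarith
  -- now apply cubic_factor and cubic_core
  obtain ⟨r, s, w, hfac⟩ := cubic_factor u (3*(g*α^2)) (3*(g*α)) g hu H
  have E0 := hfac 0
  have E1 := hfac 1
  have Em1 := hfac (-1)
  norm_num at E0 E1 Em1
  apply cubic_core u g α r s w hg
  · linear_combination E0
  · linear_combination E1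
  · linear_combination Em1

theorem stmt_6 (γ : ℕ → ℝ) (hγ : ClassicalMS γ) (α : ℝ)
    (h0 : γ 0 ≠ 0) (h1 : γ 1 ≠ 0)
    (hr1 : γ 1 / γ 0 = α) (hr2 : γ 2 / γ 1 = α) :
    ∀ n : ℕ, γ n = γ 0 * α ^ n := by
  have hα : α ≠ 0 := by
    rw [← hr1]; exact div_ne_zero h1 h0
  have hg1 : γ 1 = γ 0 * α := by
    field_simp at hr1; linarith [hr1]
  have hg2 : γ 2 = γ 0 * α^2 := by
    field_simp at hr2; rw [hr2, hg1]; ring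
  have key : ∀ n, γ n = γ 0 * α^n ∧ γ (n+1) = γ 0 * α^(n+1) ∧ γ (n+2) = γ 0 * α^(n+2) := by
    intro n
    induction n with
    | zero => exact ⟨by simp, by simpa using hg1, by simpa using hg2⟩
    | succ k ih =>
      obtain ⟨ha, hb, hc⟩ := ih
      refine ⟨hb, hc, ?_⟩
      have hg : γ 0 * α^k ≠ 0 := mul_ne_zero h0 (pow_ne_zero k hα)
      have := step γ hγ α (γ 0 * α^k) k hg hα ha (by rw [hb]; ring) (by rw [hc]; ring)
      rw [this]; ring
  exact fun n => (key n).1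
end

section
/- If {γ_k} is a classical multiplier sequence with γ_0 = γ_1 = γ_2 ≠ 0, then γ_k = γ_0 for all k. -/
open Polynomial

lemma cube_root_exists (r : ℝ) : ∃ s : ℝ, s ^ 3 = r := by
  have key : ∀ t : ℝ, 0 ≤ t → ∃ s : ℝ, s ^ 3 = t := by
    intro t ht
    refine ⟨t ^ ((1:ℝ)/3), ?_⟩
    rw [← Real.rpow_natCast (t ^ ((1:ℝ)/3)) 3, ← Real.rpow_mul ht]
    norm_num
  rcases le_or_gt 0 r with h | h
  · exact key r h
  · obtain ⟨s, hs⟩ := key (-r) (by linarith)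
    exact ⟨-s, by rw [neg_pow]; norm_num [hs]⟩

lemma sum_four (m : ℕ) (f : ℕ → ℝ) (hf : ∀ j < m, f j = 0) :
    ∑ k ∈ Finset.range (m + 4), C (f k) * X ^ k
      = C (f m) * X ^ m + C (f (m+1)) * X ^ (m+1)
        + C (f (m+2)) * X ^ (m+2) + C (f (m+3)) * X ^ (m+3) := by
  rw [show m + 4 = ((m + 3) + 1) from rfl, Finset.sum_range_succ,
    show m + 3 = (m+2)+1 from rfl, Finset.sum_range_succ,
    show m + 2 = (m+1)+1 from rfl, Finset.sum_range_succ, Finset.sum_range_succ]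
  have hz : ∑ k ∈ Finset.range m, C (f k) * X ^ k = 0 :=
    Finset.sum_eq_zero fun k hk => by
      rw [hf k (Finset.mem_range.mp hk), map_zero, zero_mul]
  rw [hz]; ring

/-- Key lemma: if `c X^m + 3c X^{m+1} + 3c X^{m+2} + d X^{m+3}` has only real
zeros and `c ≠ 0`, then `d = c`. -/
lemma cubic_key (m : ℕ) (c d : ℝ) (hc : c ≠ 0)
    (h : RealRooted (C c * X ^ m + C (3*c) * X ^ (m+1)
        + C (3*c) * X ^ (m+2) + C d * X ^ (m+3))) : d = c := by
  by_contra hdc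
  obtain ⟨s, hs⟩ := cube_root_exists ((c - d) / c)
  have hr : (c - d) / c ≠ 0 := div_ne_zero (sub_ne_zero.mpr (Ne.symm hdc)) hc
  have hs0 : s ≠ 0 := by
    intro h0; rw [h0] at hs; simp at hs; exact hr hs.symm
  have h3 : (Real.sqrt 3 : ℝ) ^ 2 = 3 := Real.sq_sqrt (by norm_num)
  have h3pos : (0:ℝ) < Real.sqrt 3 := Real.sqrt_pos.mpr (by norm_num)
  set ω : ℂ := ⟨-(1/2), Real.sqrt 3 / 2⟩ with hω
  have hω3 : ω ^ 3 = 1 := by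
    apply Complex.ext
    · simp [hω, pow_succ, Complex.mul_re, Complex.mul_im, Complex.one_re]
      linear_combination (3/8) * h3
    · simp [hω, pow_succ, Complex.mul_re, Complex.mul_im, Complex.one_im]
      linear_combination (-(Real.sqrt 3)/8) * h3
  obtain ⟨w, hw⟩ : ∃ w : ℂ, w = (s : ℂ) * ω := ⟨_, rfl⟩
  have hwim : w.im = s * (Real.sqrt 3 / 2) := by
    simp [hw, hω, Complex.mul_im]
  have hwim0 : w.im ≠ 0 := by
    rw [hwim]; exact mul_ne_zero hs0 (by positivity)
  have hw1 : w - 1 ≠ 0 := by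
    intro h0
    apply hwim0
    have := congrArg Complex.im h0
    simpa using this
  obtain ⟨z, hz⟩ : ∃ z : ℂ, z = (w - 1)⁻¹ := ⟨_, rfl⟩
  have hz0 : z ≠ 0 := hz ▸ inv_ne_zero hw1
  have hzim : z.im ≠ 0 := by
    rw [hz, Complex.inv_im]
    have h1 : (w - 1).im = w.im := by simp
    rw [h1]
    have h2 : (0:ℝ) < Complex.normSq (w - 1) := by
      rwa [Complex.normSq_pos]
    intro h0
    apply hwim0
    field_simp at h0
    simpa using h0
  have hzw : z * (w - 1) = 1 := by rw [hz]; exact inv_mul_cancel₀ hw1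
  have h1z : (1 : ℂ) + z = z * w := by linear_combination -hzw
  have hw3 : w ^ 3 = ((c - d) / c : ℝ) := by
    rw [hw, mul_pow, hω3, mul_one, ← hs]
    push_cast
    ring
  have hcC : (c : ℂ) ≠ 0 := by exact_mod_cast hc
  have hkey : (c:ℂ) + 3*c*z + 3*c*z^2 + d*z^3 = 0 := by
    have e1 : ((1:ℂ) + z) ^ 3 = z ^ 3 * w ^ 3 := by rw [h1z]; ring
    rw [hw3] at e1
    push_cast at e1
    field_simp at e1
    linear_combination e1
  rcases h with hP | hroots
  · have := congrArg (fun p => coeff p m) hP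
    simp only [coeff_add, coeff_C_mul, coeff_X_pow, coeff_zero] at this
    simp at this
    exact hc this
  · apply hzim
    apply hroots
    simp only [map_add, map_mul, map_pow, aeval_C, aeval_X, Complex.coe_algebraMap]
    push_cast
    linear_combination z ^ m * hkey

theorem stmt_7 (γ : ℕ → ℝ) (hγ : ClassicalMS γ)
    (h01 : γ 0 = γ 1) (h12 : γ 1 = γ 2) (h0 : γ 0 ≠ 0) :
    ∀ k : ℕ, γ k = γ 0 := by
  have hγ' : IsMultSeq (fun k => Polynomial.X ^ k) γ := hγ
  have step : ∀ m, γ m = γ 0 → γ (m+1) = γ 0 → γ (m+2) = γ 0 → γ (m+3) = γ 0 := by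
    intro m hm hm1 hm2
    set a : ℕ → ℝ := fun j =>
      if j = m then 1 else if j = m+1 then 3 else if j = m+2 then 3
        else if j = m+3 then 1 else 0 with ha
    have ham : a m = 1 := by simp [ha]
    have ham1 : a (m+1) = 3 := by simp [ha]
    have ham2 : a (m+2) = 3 := by simp [ha]
    have ham3 : a (m+3) = 1 := by simp [ha]
    have hflow : ∀ j < m, a j = 0 := by
      intro j hj
      simp only [ha]
      rw [if_neg (by omega), if_neg (by omega), if_neg (by omega), if_neg (by omega)]
    have hsum : RealRooted (∑ k ∈ Finset.range (m + 3 + 1),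
        Polynomial.C (a k) * (fun k => Polynomial.X ^ k : ℕ → Polynomial ℝ) k) := by
      right
      intro ζ hζ
      rw [show m + 3 + 1 = m + 4 from rfl] at hζ
      simp only at hζ
      rw [sum_four m a hflow, ham, ham1, ham2, ham3] at hζ
      simp only [map_add, map_mul, map_pow, aeval_C, aeval_X,
        Complex.coe_algebraMap] at hζ
      push_cast at hζ
      have hfac : ζ ^ m * ((1 : ℂ) + ζ) ^ 3 = 0 := by linear_combination hζ
      rcases mul_eq_zero.mp hfac with h1 | h2
      · have : ζ = 0 := by
          rcases Nat.eq_zero_or_pos m with rfl | hm0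
          · simp at h1
          · exact pow_eq_zero_iff (by omega) |>.mp h1
        simp [this]
      · have : (1 : ℂ) + ζ = 0 := pow_eq_zero_iff (by norm_num) |>.mp h2
        have : ζ = -1 := by linear_combination this
        simp [this]
    have hmult := hγ' (m + 3) a hsum
    rw [show m + 3 + 1 = m + 4 from rfl] at hmult
    simp only at hmult
    rw [sum_four m (fun k => a k * γ k) (fun j hj => by show a j * γ j = 0; rw [hflow j hj, zero_mul])] at hmult
    simp only [ham, ham1, ham2, ham3, hm, hm1, hm2, one_mul] at hmult
    exact cubic_key m (γ 0) (γ (m+3)) h0 hmult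
  have main : ∀ k, γ k = γ 0 ∧ γ (k+1) = γ 0 ∧ γ (k+2) = γ 0 := by
    intro k
    induction k with
    | zero => exact ⟨rfl, h01.symm, by rw [← h12, ← h01]⟩
    | succ n ih => exact ⟨ih.2.1, ih.2.2, step n ih.1 ih.2.1 ih.2.2⟩
  exact fun k => (main k).1
end

section
/- If {γ_k} is a classical multiplier sequence, then its terms satisfy Turán's inequality: γ_k^2 − γ_{k−1}γ_{k+1} ≥ 0 for all k ≥ 1. -/
open Polynomial

lemma sum3_eq (m : ℕ) (g : ℕ → ℝ) (hg : ∀ j < m, g j = 0) :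
    ∑ j ∈ Finset.range (m + 3), Polynomial.C (g j) * Polynomial.X ^ j =
      Polynomial.C (g m) * Polynomial.X ^ m +
      Polynomial.C (g (m+1)) * Polynomial.X ^ (m+1) +
      Polynomial.C (g (m+2)) * Polynomial.X ^ (m+2) := by
  rw [show m + 3 = (m + 2) + 1 by ring, Finset.sum_range_succ,
    show m + 2 = (m + 1) + 1 by ring, Finset.sum_range_succ,
    Finset.sum_range_succ]
  have h0 : ∑ j ∈ Finset.range m, Polynomial.C (g j) * Polynomial.X ^ j = 0 :=
    Finset.sum_eq_zero fun j hj => by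
      rw [hg j (Finset.mem_range.mp hj), map_zero, zero_mul]
  rw [h0, zero_add]

theorem stmt_8 (γ : ℕ → ℝ) (hγ : ClassicalMS γ) :
    ∀ k : ℕ, 1 ≤ k → γ k ^ 2 - γ (k - 1) * γ (k + 1) ≥ 0 := by
  intro k hk
  obtain ⟨m, rfl⟩ : ∃ m, k = m + 1 := ⟨k - 1, by omega⟩
  simp only [Nat.add_sub_cancel]
  -- rename
  set b := γ (m + 1) with hb
  set c := γ m with hc
  set A := γ (m + 1 + 1) with hA
  by_contra hneg
  push_neg at hneg
  have hD : 0 < c * A - b ^ 2 := by linarith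
  have hAne : A ≠ 0 := by
    intro h
    rw [h, mul_zero] at hD
    nlinarith [sq_nonneg b]
  -- the input polynomial
  set a : ℕ → ℝ := fun j => if j = m then 1 else if j = m+1 then 2 else if j = m+2 then 1 else 0 with ha
  have ham : a m = 1 := by simp [ha]
  have ham1 : a (m+1) = 2 := by simp [ha]
  have ham2 : a (m+2) = 1 := by simp [ha]
  have hsump : ∑ j ∈ Finset.range ((m+2) + 1), Polynomial.C (a j) * (fun k => Polynomial.X ^ k) j =
      Polynomial.C (1:ℝ) * Polynomial.X ^ m + Polynomial.C (2:ℝ) * Polynomial.X ^ (m+1) +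
      Polynomial.C (1:ℝ) * Polynomial.X ^ (m+2) := by
    simp only []
    rw [show (m+2)+1 = m + 3 by ring, sum3_eq m a (fun j hj => by
      simp only [ha]; rw [if_neg (by omega), if_neg (by omega), if_neg (by omega)]), ham, ham1, ham2]
  have hsumq : ∑ j ∈ Finset.range ((m+2) + 1), Polynomial.C (a j * γ j) * (fun k => Polynomial.X ^ k) j =
      Polynomial.C c * Polynomial.X ^ m + Polynomial.C (2*b) * Polynomial.X ^ (m+1) +
      Polynomial.C A * Polynomial.X ^ (m+2) := by
    simp only []
    rw [show (m+2)+1 = m + 3 by ring,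
      sum3_eq m (fun j => a j * γ j) (fun j hj => by
        simp only [ha]; rw [if_neg (by omega), if_neg (by omega), if_neg (by omega), zero_mul])]
    simp only [ham, ham1, ham2]
    norm_num [hb, hc, hA, show m + 1 + 1 = m + 2 by ring]
  have hp : RealRooted (∑ j ∈ Finset.range ((m+2) + 1), Polynomial.C (a j) * (fun k => Polynomial.X ^ k) j) := by
    right
    intro z hz
    rw [hsump] at hz
    simp only [map_add, map_mul, aeval_C, map_pow, aeval_X, Complex.coe_algebraMap] at hz
    push_cast at hz
    have hfac : z ^ m * (1 + z) ^ 2 = 0 := by linear_combination hz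
    rcases mul_eq_zero.mp hfac with h1 | h2
    · have : z = 0 := by
        rcases Nat.eq_zero_or_pos m with hm | hm
        · simp [hm] at h1
        · exact pow_eq_zero_iff (by omega) |>.mp h1
      simp [this]
    · have : (1 : ℂ) + z = 0 := by
        have := sq_eq_zero_iff.mp h2
        exact this
      have hz1 : z = -1 := by linear_combination this
      rw [hz1]; simp
  have hq := hγ (m+2) a hp
  rw [hsumq] at hq
  -- q is nonzero since its top coefficient is A ≠ 0
  have hqne : Polynomial.C c * Polynomial.X ^ m + Polynomial.C (2*b) * Polynomial.X ^ (m+1) +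
      Polynomial.C A * Polynomial.X ^ (m+2) ≠ 0 := by
    intro h
    have := congrArg (fun p => Polynomial.coeff p (m+2)) h
    simp only [Polynomial.coeff_add, Polynomial.coeff_C_mul, Polynomial.coeff_X_pow,
      Polynomial.coeff_zero] at this
    norm_num at this
    exact hAne this
  rcases hq with h | hroot
  · exact hqne h
  -- construct the nonreal root
  set s := Real.sqrt (c * A - b ^ 2) with hs
  have hs2 : s ^ 2 = c * A - b ^ 2 := Real.sq_sqrt hD.le
  have hspos : 0 < s := Real.sqrt_pos.mpr hD
  set z : ℂ := (Complex.I * s - b) / A with hzdef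
  have hAz : (A : ℂ) * z = Complex.I * s - b := by
    rw [hzdef]
    field_simp
    exact mul_div_cancel_left₀ _ (Complex.ofReal_ne_zero.mpr hAne)
  have hscast : (s : ℂ) ^ 2 = (c : ℂ) * A - (b : ℂ) ^ 2 := by
    have := congrArg (Complex.ofReal) hs2
    push_cast at this
    exact this
  have hquadA : (A : ℂ) * ((c : ℂ) + 2 * b * z + A * z ^ 2) = 0 := by
    have : (A : ℂ) * ((c : ℂ) + 2 * b * z + A * z ^ 2) =
        (A : ℂ) * c + 2 * b * ((A:ℂ) * z) + ((A:ℂ) * z) ^ 2 := by ring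
    rw [this, hAz]
    linear_combination (s : ℂ) ^ 2 * Complex.I_sq - hscast
  have hquad : (c : ℂ) + 2 * b * z + A * z ^ 2 = 0 := by
    rcases mul_eq_zero.mp hquadA with h | h
    · exact absurd (by exact_mod_cast h) hAne
    · exact h
  have him : z.im = s / A := by
    rw [hzdef]
    rw [Complex.div_ofReal_im]
    simp
  have hzero : (Polynomial.aeval z) (Polynomial.C c * Polynomial.X ^ m + Polynomial.C (2*b) * Polynomial.X ^ (m+1) +
      Polynomial.C A * Polynomial.X ^ (m+2)) = 0 := by
    simp only [map_add, map_mul, aeval_C, map_pow, aeval_X, Complex.coe_algebraMap]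
    push_cast
    calc (c:ℂ) * z ^ m + 2 * b * z ^ (m+1) + A * z ^ (m+2)
        = z ^ m * ((c : ℂ) + 2 * b * z + A * z ^ 2) := by ring
      _ = 0 := by rw [hquad, mul_zero]
  have := hroot z hzero
  rw [him] at this
  exact (div_ne_zero hspos.ne' hAne) this
end

section
/- If {γ_k} is a classical multiplier sequence and there exist integers n > m ≥ 0 with γ_m ≠ 0 and γ_n = 0, then γ_k = 0 for all k ≥ n. -/
open Polynomial

private lemma stmt_9_key (γ : ℕ → ℝ) (hγ : ClassicalMS γ) (m' n k : ℕ) (hm' : γ m' ≠ 0)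
    (hm'n : m' < n) (hnk : n < k)
    (hmid : ∀ j, m' < j → j < k → γ j = 0) : γ k = 0 := by
  by_contra hk
  set d : ℕ := k - m' with hd
  have hd2 : 2 ≤ d := by omega
  have hkeq : k = d + m' := by omega
  set t : ℝ := γ k / γ m' with ht
  have hX1 : ((X : ℝ[X]) + 1).Monic := by simpa using monic_X_add_C (1:ℝ)
  set r : Polynomial ℝ := (X + 1) ^ (d - 1) * (X + C t) with hr
  set p : Polynomial ℝ := r * X ^ m' with hp
  have hrmonic : r.Monic := (hX1.pow _).mul (monic_X_add_C t)
  have hX1deg : ((X : ℝ[X]) + 1).natDegree = 1 := by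
    simpa using natDegree_X_add_C (1:ℝ)
  have hrdeg : r.natDegree = d := by
    rw [hr, Monic.natDegree_mul (hX1.pow _) (monic_X_add_C t), natDegree_pow,
      hX1deg, natDegree_X_add_C]
    omega
  have hpdeg : p.natDegree = k := by
    rw [hp, Monic.natDegree_mul hrmonic (monic_X_pow m'), hrdeg, natDegree_X_pow]
    omega
  -- p as a sum
  have hpsum : p = ∑ j ∈ Finset.range (k + 1), C (p.coeff j) * X ^ j := by
    conv_lhs => rw [p.as_sum_range' (k+1) (by omega)]
    simp [C_mul_X_pow_eq_monomial]
  -- p is real rooted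
  have hpr : RealRooted p := by
    right
    intro z hz
    rw [hp, hr] at hz
    simp only [map_mul, map_pow, map_add, aeval_X, aeval_C, map_one] at hz
    rcases mul_eq_zero.mp hz with h | h
    · rcases mul_eq_zero.mp h with h | h
      · have : z + 1 = 0 := pow_eq_zero_iff (by omega : d - 1 ≠ 0) |>.mp h
        have : z = -1 := by linear_combination this
        simp [this]
      · have hzt : z = -(algebraMap ℝ ℂ t) := by linear_combination h
        simp [hzt]
    · rcases Nat.eq_zero_or_pos m' with h0 | h0
      · simp [h0] at h
      · have : z = 0 := pow_eq_zero_iff (by omega : m' ≠ 0) |>.mp h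
        simp [this]
  -- apply the multiplier sequence
  have h1 : RealRooted (∑ j ∈ Finset.range (k + 1),
      C (p.coeff j) * (fun i => (X:ℝ[X]) ^ i) j) := by
    simpa using hpsum ▸ hpr
  have h2 := hγ k (fun j => p.coeff j) h1
  simp only [] at h2
  -- compute the key coefficients
  have hcm : p.coeff m' = t := by
    rw [hp, coeff_mul_X_pow', if_pos le_rfl, Nat.sub_self, coeff_zero_eq_eval_zero, hr]
    simp
  have hck : p.coeff k = 1 := by
    rw [hp, hkeq, coeff_mul_X_pow, ← hrdeg]
    exact hrmonic.coeff_natDegree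
  -- identify the resulting polynomial
  have hS : (∑ j ∈ Finset.range (k + 1), C (p.coeff j * γ j) * X ^ j)
      = C (γ k) * X ^ m' + C (γ k) * X ^ k := by
    rw [← Finset.sum_subset (s₁ := {m', k})
      (by
        intro j hj
        simp only [Finset.mem_insert, Finset.mem_singleton] at hj
        rcases hj with h | h <;> subst h <;> simp [Finset.mem_range] <;> omega)]
    · rw [Finset.sum_pair (by omega : m' ≠ k), hcm, hck, ht,
        div_mul_cancel₀ _ hm', one_mul]
    · intro j hj hj2
      simp only [Finset.mem_insert, Finset.mem_singleton, not_or] at hj2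
      obtain ⟨hjm, hjk⟩ := hj2
      have hjr : j < k + 1 := Finset.mem_range.mp hj
      rcases lt_or_ge j m' with hlt | hge
      · have : p.coeff j = 0 := by
          rw [hp, coeff_mul_X_pow', if_neg (by omega)]
        simp [this]
      · have : γ j = 0 := hmid j (by omega) (by omega)
        simp [this]
  rw [hS] at h2
  -- the resulting polynomial is nonzero
  have hSne : C (γ k) * X ^ m' + C (γ k) * X ^ k ≠ 0 := by
    intro hzero
    have := congrArg (fun q => Polynomial.coeff q k) hzero
    simp only [coeff_add, coeff_C_mul, coeff_X_pow, coeff_zero] at this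
    rw [if_neg (by omega : ¬ k = m')] at this
    simp at this
    exact hk this
  have hroots := h2.resolve_left hSne
  -- the nonreal root
  set z : ℂ := Complex.exp ((↑(Real.pi / d) : ℂ) * Complex.I) with hzdef
  have hzd : z ^ d = -1 := by
    rw [hzdef, ← Complex.exp_nat_mul]
    have hdne : (d : ℂ) ≠ 0 := Nat.cast_ne_zero.mpr (by omega)
    have : (d : ℂ) * ((↑(Real.pi / d) : ℂ) * Complex.I) = ↑Real.pi * Complex.I := by
      push_cast
      field_simp
    rw [this, Complex.exp_pi_mul_I]
  have hzroot : Polynomial.aeval z (C (γ k) * X ^ m' + C (γ k) * X ^ k) = 0 := by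
    simp only [map_add, map_mul, map_pow, aeval_X, aeval_C]
    rw [hkeq, pow_add, hzd]
    ring
  have him := hroots z hzroot
  have : z.im = Real.sin (Real.pi / d) := by
    rw [hzdef]
    exact Complex.exp_ofReal_mul_I_im _
  rw [this] at him
  have hpos : 0 < Real.sin (Real.pi / d) := by
    apply Real.sin_pos_of_pos_of_lt_pi
    · positivity
    · rw [div_lt_iff₀ (by positivity)]
      nlinarith [Real.pi_pos,
        mul_le_mul_of_nonneg_left (by exact_mod_cast hd2 : (2:ℝ) ≤ d) Real.pi_pos.le]
  linarith


theorem stmt_9 (γ : ℕ → ℝ) (hγ : ClassicalMS γ) (m n : ℕ) (hmn : m < n)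
    (hm : γ m ≠ 0) (hn : γ n = 0) :
    ∀ k : ℕ, n ≤ k → γ k = 0 := by
  classical
  set m' : ℕ := Nat.findGreatest (fun j => γ j ≠ 0) (n - 1) with hm'def
  have hm'le : m' ≤ n - 1 := Nat.findGreatest_le _
  have hm'ne : γ m' ≠ 0 := Nat.findGreatest_spec (P := fun j => γ j ≠ 0) (by omega : m ≤ n - 1) hm
  have hm'n : m' < n := by omega
  have hmax : ∀ j, m' < j → j < n → γ j = 0 := by
    intro j h1 h2
    by_contra h
    exact Nat.findGreatest_is_greatest (P := fun j => γ j ≠ 0) h1 (by omega) h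
  intro k
  induction k using Nat.strong_induction_on with
  | _ k ih =>
    intro hnk
    rcases eq_or_lt_of_le hnk with h | h
    · exact h ▸ hn
    · refine stmt_9_key γ hγ m' n k hm'ne hm'n h ?_
      intro j hj1 hj2
      rcases lt_trichotomy j n with hjn | hjn | hjn
      · exact hmax j hj1 hjn
      · exact hjn ▸ hn
      · exact ih j hj2 (le_of_lt hjn)
end

section
/- If {γ_k} is a classical multiplier sequence, then either all nonzero terms of the sequence have the same sign, or the terms alternate in sign (i.e., γ_k γ_{k+2} ≥ 0 for all k). -/
open Polynomial

open Real in
theorem MS.rootCon (w : ℝ) (hw : 0 < w) (d : ℕ) (hd : 2 ≤ d) :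
    ∃ z : ℂ, z ^ d = -(w:ℂ) ∧ 0 < z.im := by
  have hdR : (0:ℝ) < d := by positivity
  have hdC : (d:ℂ) ≠ 0 := Nat.cast_ne_zero.mpr (by omega)
  set r : ℝ := w ^ ((d:ℝ)⁻¹) with hr
  refine ⟨(r:ℂ) * Complex.exp ((π/d : ℝ) * Complex.I), ?_, ?_⟩
  · rw [mul_pow, ← Complex.exp_nat_mul]
    have h1 : (d:ℂ) * (((π/d : ℝ):ℂ) * Complex.I) = (π:ℝ) * Complex.I := by
      push_cast
      field_simp
    rw [h1, Complex.exp_pi_mul_I]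
    have h2 : (r:ℂ)^d = (w:ℂ) := by
      rw [← Complex.ofReal_pow]
      norm_cast
      rw [hr, ← Real.rpow_natCast (w ^ ((d:ℝ)⁻¹)) d, ← Real.rpow_mul hw.le]
      rw [inv_mul_cancel₀ (by positivity : (d:ℝ) ≠ 0), Real.rpow_one]
    rw [h2]; ring
  · have hsin : 0 < Real.sin (π/d) := by
      apply Real.sin_pos_of_pos_of_lt_pi
      · positivity
      · rw [div_lt_iff₀ hdR]
        nlinarith [mul_lt_mul_of_pos_left (show (1:ℝ) < d by exact_mod_cast by omega) Real.pi_pos]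
    have hrpos : 0 < r := Real.rpow_pos_of_pos hw _
    simp only [Complex.mul_im, Complex.ofReal_re, Complex.ofReal_im,
      Complex.exp_ofReal_mul_I_im, Complex.exp_ofReal_mul_I_re, zero_mul, add_zero]
    exact mul_pos hrpos hsin

open Real in
theorem MS.rootCon' (w : ℝ) (hw : w < 0) (d : ℕ) (hd : 3 ≤ d) :
    ∃ z : ℂ, z ^ d = -(w:ℂ) ∧ 0 < z.im := by
  have hdR : (0:ℝ) < d := by positivity
  have hdC : (d:ℂ) ≠ 0 := Nat.cast_ne_zero.mpr (by omega)
  have hw' : 0 < -w := by linarith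
  set r : ℝ := (-w) ^ ((d:ℝ)⁻¹) with hr
  refine ⟨(r:ℂ) * Complex.exp ((2*π/d : ℝ) * Complex.I), ?_, ?_⟩
  · rw [mul_pow, ← Complex.exp_nat_mul]
    have h1 : (d:ℂ) * (((2*π/d : ℝ):ℂ) * Complex.I) = 2 * (π:ℝ) * Complex.I := by
      push_cast
      field_simp
    rw [h1, Complex.exp_two_pi_mul_I]
    have h2 : (r:ℂ)^d = ((-w : ℝ):ℂ) := by
      rw [← Complex.ofReal_pow]
      norm_cast
      rw [hr, ← Real.rpow_natCast ((-w) ^ ((d:ℝ)⁻¹)) d, ← Real.rpow_mul hw'.le]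
      rw [inv_mul_cancel₀ (by positivity : (d:ℝ) ≠ 0), Real.rpow_one]
    rw [h2]; push_cast; ring
  · have hsin : 0 < Real.sin (2*π/d) := by
      apply Real.sin_pos_of_pos_of_lt_pi
      · positivity
      · rw [div_lt_iff₀ hdR]
        nlinarith [mul_lt_mul_of_pos_left (show (2:ℝ) < d by exact_mod_cast by omega) Real.pi_pos]
    have hrpos : 0 < r := Real.rpow_pos_of_pos hw' _
    simp only [Complex.mul_im, Complex.ofReal_re, Complex.ofReal_im,
      Complex.exp_ofReal_mul_I_im, Complex.exp_ofReal_mul_I_re, zero_mul, add_zero]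
    exact mul_pos hrpos hsin

theorem MS.evalSum (n : ℕ) (b : ℕ → ℝ) (z : ℂ) :
    aeval z (∑ t ∈ Finset.range (n+1), C (b t) * X^t)
      = ∑ t ∈ Finset.range (n+1), (b t : ℂ) * z^t := by
  simp [map_sum]

theorem MS.coeffSum (n : ℕ) (b : ℕ → ℝ) (m : ℕ) (hm : m ∈ Finset.range (n+1)) :
    (∑ t ∈ Finset.range (n+1), C (b t) * X^t).coeff m = b m := by
  simp [Polynomial.finset_sum_coeff, Polynomial.coeff_C_mul, Polynomial.coeff_X_pow,
    Finset.sum_ite_eq' (Finset.range (n+1)) m, hm]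

theorem MS.pairSum {n j k : ℕ} (hj : j ∈ Finset.range n) (hk : k ∈ Finset.range n) (hjk : j ≠ k)
    (f : ℕ → ℂ) (hf : ∀ t ∈ Finset.range n, t ≠ j → t ≠ k → f t = 0) :
    ∑ t ∈ Finset.range n, f t = f j + f k := by
  rw [← Finset.sum_pair hjk]
  exact (Finset.sum_subset (by simp [Finset.insert_subset_iff, hj, hk])
    (fun t ht hnt => hf t ht (by simp at hnt; exact hnt.1) (by simp at hnt; exact hnt.2))).symm

theorem MS.lemA {γ : ℕ → ℝ} (hγ : ClassicalMS γ) (k : ℕ) : 0 ≤ γ k * γ (k+2) := by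
  by_contra h
  push_neg at h
  have hk2 : γ (k+2) ≠ 0 := fun h0 => by simp [h0] at h
  set a : ℕ → ℝ := fun t => if t = k then (-1:ℝ) else if t = k+2 then 1 else 0 with ha
  have hkm : k ∈ Finset.range (k+2+1) := by simp
  have hk2m : k+2 ∈ Finset.range (k+2+1) := by simp
  have hne : k ≠ k+2 := by omega
  have hin : RealRooted (∑ t ∈ Finset.range (k+2+1), C (a t) * (fun t => X^t) t) := by
    right
    intro z hz
    rw [MS.evalSum] at hz
    rw [MS.pairSum hkm hk2m hne _ (fun t ht h1 h2 => by simp [ha, h1, h2])] at hz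
    simp [ha] at hz
    have hz' : z^k * ((z - 1) * (z + 1)) = 0 := by linear_combination hz
    rcases mul_eq_zero.mp hz' with h1 | h1
    · have hz0 : z = 0 := by
        rcases Nat.eq_zero_or_pos k with hk0 | hk0
        · simp [hk0] at h1
        · exact pow_eq_zero_iff (by omega : k ≠ 0) |>.mp h1
      simp [hz0]
    · rcases mul_eq_zero.mp h1 with h2 | h2
      · have : z = 1 := by linear_combination h2
        simp [this]
      · have : z = -1 := by linear_combination h2
        simp [this]
  have hout := hγ (k+2) a hin
  have hdivneg : γ k / γ (k+2) < 0 := by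
    rw [show γ k / γ (k+2) = (γ k * γ (k+2)) / (γ (k+2))^2 by field_simp]
    exact div_neg_of_neg_of_pos h (by positivity)
  set s : ℝ := Real.sqrt (-(γ k / γ (k+2))) with hs
  have hspos : 0 < s := Real.sqrt_pos.mpr (by linarith)
  have hs2 : s^2 = -(γ k / γ (k+2)) := Real.sq_sqrt (by linarith)
  set z : ℂ := Complex.I * s with hzdef
  have him : z.im = s := by simp [hzdef]
  have hz2 : z^2 = ((γ k / γ (k+2) : ℝ) : ℂ) := by
    rw [hzdef, mul_pow, Complex.I_sq]
    rw [show -1 * ((s:ℂ))^2 = ((-(s^2) : ℝ) : ℂ) by push_cast; ring]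
    rw [hs2, neg_neg]
  rcases hout with h0 | hroots
  · have hc := MS.coeffSum (k+2) (fun t => a t * γ t) (k+2) hk2m
    rw [h0] at hc
    simp [ha] at hc
    exact hk2 hc.symm
  · have hk2C : ((γ (k+2)):ℂ) ≠ 0 := Complex.ofReal_ne_zero.mpr hk2
    have hcancel : ((γ (k+2)):ℂ) * ((γ k / γ (k+2) : ℝ):ℂ) = (γ k : ℂ) := by
      push_cast
      field_simp
    have hzero : aeval z (∑ t ∈ Finset.range (k+2+1), C (a t * γ t) * (fun t => X^t) t) = 0 := by
      rw [MS.evalSum]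
      rw [MS.pairSum hkm hk2m hne _ (fun t ht h1 h2 => by simp [ha, h1, h2])]
      have hne2 : k + 2 ≠ k := by omega
      simp only [ha]
      norm_num [hne2]
      rw [show z^(k+2) = z^k * z^2 from by ring, hz2]
      linear_combination z^k * hcancel
    have := hroots z hzero
    rw [him] at this
    exact absurd this (ne_of_gt hspos)

theorem MS.inputEval (j d : ℕ) (z : ℂ) :
    ∑ t ∈ Finset.range (j+d+1),
      ((if j ≤ t ∧ t ≤ j+d then ((d.choose (t-j)):ℝ) else 0 : ℝ) : ℂ) * z^t
      = z^j * (z+1)^d := by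
  rw [← Finset.sum_subset (show Finset.Ico j (j+d+1) ⊆ Finset.range (j+d+1) by
        intro t ht; simp only [Finset.mem_Ico] at ht; simp only [Finset.mem_range]; omega)
      (fun t ht hnt => by
        simp only [Finset.mem_Ico, not_and, not_lt] at hnt
        simp only [Finset.mem_range] at ht
        have : ¬(j ≤ t ∧ t ≤ j + d) := by omega
        simp [this])]
  rw [Finset.sum_Ico_eq_sum_range]
  have harith : j + d + 1 - j = d + 1 := by omega
  rw [harith]
  rw [add_pow, Finset.mul_sum]
  apply Finset.sum_congr rfl
  intro i hi
  simp only [Finset.mem_range] at hi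
  have h1 : j ≤ j + i ∧ j + i ≤ j + d := ⟨by omega, by omega⟩
  rw [if_pos h1]
  have h2 : j + i - j = i := by omega
  rw [h2]
  push_cast
  ring

theorem MS.gapLem {γ : ℕ → ℝ} (hγ : ClassicalMS γ) (j d : ℕ) (hd : 2 ≤ d) (h0 : γ j ≠ 0)
    (hdd : γ (j+d) ≠ 0) (hmid : ∀ i, 0 < i → i < d → γ (j+i) = 0) : False := by
  set a : ℕ → ℝ := fun t => if j ≤ t ∧ t ≤ j+d then ((d.choose (t-j)):ℝ) else 0 with ha
  have hjm : j ∈ Finset.range (j+d+1) := by simp only [Finset.mem_range]; omega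
  have hjdm : j+d ∈ Finset.range (j+d+1) := by simp only [Finset.mem_range]; omega
  have hne : j ≠ j+d := by omega
  have hin : RealRooted (∑ t ∈ Finset.range (j+d+1), C (a t) * (fun t => X^t) t) := by
    right
    intro z hz
    rw [MS.evalSum] at hz
    simp only [ha] at hz
    rw [MS.inputEval j d z] at hz
    rcases mul_eq_zero.mp hz with h1 | h1
    · have hz0 : z = 0 := by
        rcases Nat.eq_zero_or_pos j with hj0 | hj0
        · simp [hj0] at h1
        · exact pow_eq_zero_iff (by omega : j ≠ 0) |>.mp h1
      simp [hz0]
    · have hz0 : z = -1 := by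
        have h2 : z + 1 = 0 := pow_eq_zero_iff (by omega : d ≠ 0) |>.mp h1
        linear_combination h2
      simp [hz0]
  have hout := hγ (j+d) a hin
  have hvan : ∀ t, t ≠ j → t ≠ j+d → a t * γ t = 0 := by
    intro t h1 h2
    by_cases hc : j ≤ t ∧ t ≤ j + d
    · have hz : γ t = 0 := by
        have ht : t = j + (t - j) := by omega
        rw [ht]
        exact hmid (t-j) (by omega) (by omega)
      simp [hz]
    · simp [ha, hc]
  have haj : a j = 1 := by simp [ha]
  have hajd : a (j+d) = 1 := by simp [ha]
  obtain ⟨z, hzd, him⟩ : ∃ z : ℂ, z ^ d = -((γ j / γ (j+d) : ℝ):ℂ) ∧ 0 < z.im := by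
    have hw : γ j / γ (j+d) ≠ 0 := div_ne_zero h0 hdd
    rcases lt_or_gt_of_ne hw with hneg | hpos
    · rcases Nat.lt_or_ge d 3 with h3 | h3
      · exfalso
        have hd2 : d = 2 := by omega
        subst hd2
        have hprod : 0 < γ j * γ (j+2) :=
          lt_of_le_of_ne (MS.lemA hγ j) (Ne.symm (mul_ne_zero h0 hdd))
        have : 0 < γ j / γ (j+2) := by
          rw [show γ j / γ (j+2) = (γ j * γ (j+2)) / (γ (j+2))^2 by field_simp]
          positivity
        linarith
      · exact MS.rootCon' _ hneg d h3
    · exact MS.rootCon _ hpos d hd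
  rcases hout with hq0 | hroots
  · have hc := MS.coeffSum (j+d) (fun t => a t * γ t) j hjm
    rw [hq0] at hc
    simp only [coeff_zero] at hc
    rw [haj, one_mul] at hc
    exact h0 hc.symm
  · have hjdC : ((γ (j+d)):ℂ) ≠ 0 := Complex.ofReal_ne_zero.mpr hdd
    have hcancel : ((γ (j+d)):ℂ) * ((γ j / γ (j+d) : ℝ):ℂ) = (γ j : ℂ) := by
      push_cast
      field_simp
    have hzero : aeval z (∑ t ∈ Finset.range (j+d+1), C (a t * γ t) * (fun t => X^t) t) = 0 := by
      rw [MS.evalSum]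
      rw [MS.pairSum hjm hjdm hne _ (fun t ht h1 h2 => by rw [hvan t h1 h2]; simp)]
      rw [haj, hajd, one_mul, one_mul]
      linear_combination ((γ (j+d) : ℂ) * z^j) * hzd - z^j * hcancel
    have := hroots z hzero
    linarith

theorem MS.persist {γ : ℕ → ℝ} (hγ : ClassicalMS γ) (i : ℕ) (hi : γ i ≠ 0)
    (h1 : γ (i+1) = 0) : ∀ s, γ (i+1+s) = 0 := by
  intro s
  induction s using Nat.strong_induction_on with
  | _ s ih =>
    rcases Nat.eq_zero_or_pos s with h | h
    · simpa [h] using h1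
    · by_contra hns
      refine MS.gapLem hγ i (s+1) (by omega) hi ?_ ?_
      · rw [show i+(s+1) = i+1+s by omega]
        exact hns
      · intro t ht1 ht2
        rw [show i + t = i + 1 + (t-1) by omega]
        exact ih (t-1) (by omega)

theorem MS.step {γ : ℕ → ℝ} (hγ : ClassicalMS γ) {i n : ℕ} (hi : γ i ≠ 0) (hn : γ n ≠ 0)
    (hlt : i < n) : γ (i+1) ≠ 0 := by
  intro h1
  have h2 := MS.persist hγ i hi h1 (n - (i+1))
  rw [show i+1+(n-(i+1)) = n by omega] at h2
  exact hn h2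

theorem MS.intervalNZ {γ : ℕ → ℝ} (hγ : ClassicalMS γ) {a b : ℕ} (hA : γ a ≠ 0) (hB : γ b ≠ 0) :
    ∀ i, a ≤ i → i ≤ b → γ i ≠ 0 := by
  intro i hai
  induction i, hai using Nat.le_induction with
  | base => intro _; exact hA
  | succ n hn ih =>
    intro hb
    exact MS.step hγ (ih (by omega)) hB (by omega)

theorem MS.transfer {x y z : ℝ} (h1 : 0 < x * y) (h2 : 0 < x * z) : 0 < y * z := by
  have hx : x ≠ 0 := fun h => by simp [h] at h1
  have hq := mul_pos h1 h2
  have hx2 : 0 < x * x := mul_self_pos.mpr hx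
  by_contra hc
  push_neg at hc
  nlinarith

theorem stmt_10 (γ : ℕ → ℝ) (hγ : ClassicalMS γ) :
    (∀ j k : ℕ, 0 ≤ γ j * γ k) ∨ (∀ k : ℕ, γ k * γ (k + 1) ≤ 0) := by
  by_cases hAlt : ∀ k, γ k * γ (k + 1) ≤ 0
  · exact Or.inr hAlt
  · left
    push_neg at hAlt
    obtain ⟨m, hm⟩ := hAlt
    intro j k
    by_contra hjk
    push_neg at hjk
    have hj : γ j ≠ 0 := fun h => by simp [h] at hjk
    have hk : γ k ≠ 0 := fun h => by simp [h] at hjk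
    have hm1 : γ m ≠ 0 := fun h => by simp [h] at hm
    have hm2 : γ (m+1) ≠ 0 := fun h => by simp [h] at hm
    set A := min (min j k) m with hAdef
    set B := max (max j k) (m+1) with hBdef
    have hA : γ A ≠ 0 := by
      have hcase : A = j ∨ A = k ∨ A = m := by omega
      rcases hcase with h | h | h <;> rw [h] <;> assumption
    have hB : γ B ≠ 0 := by
      have hcase : B = j ∨ B = k ∨ B = m+1 := by omega
      rcases hcase with h | h | h <;> rw [h] <;> assumption
    have hNZ : ∀ i, A ≤ i → i ≤ B → γ i ≠ 0 := MS.intervalNZ hγ hA hB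
    have hpos2 : ∀ i, A ≤ i → i+2 ≤ B → 0 < γ i * γ (i+2) := fun i h1 h2 =>
      lt_of_le_of_ne (MS.lemA hγ i)
        (Ne.symm (mul_ne_zero (hNZ i h1 (by omega)) (hNZ (i+2) (by omega) h2)))
    have hup : ∀ i, m ≤ i → i+1 ≤ B → 0 < γ i * γ (i+1) := by
      intro i him
      induction i, him using Nat.le_induction with
      | base => intro _; exact hm
      | succ n hn ih =>
        intro hB1
        have h1 : 0 < γ n * γ (n+1) := ih (by omega)
        have h2 : 0 < γ n * γ (n+2) := hpos2 n (by omega) (by omega)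
        have := MS.transfer h1 h2
        rwa [show n+1+1 = n+2 by omega]
    have hdown : ∀ t, A + t ≤ m → 0 < γ (m - t) * γ (m - t + 1) := by
      intro t
      induction t with
      | zero => intro _; simpa using hm
      | succ t ih =>
        intro hle
        have h1 := ih (by omega)
        have h2 : 0 < γ (m-(t+1)) * γ (m-(t+1)+2) := hpos2 _ (by omega) (by omega)
        have e1 : m - t = m - (t+1) + 1 := by omega
        rw [e1] at h1
        have e2 : m - (t+1) + 1 + 1 = m - (t+1) + 2 := by omega
        rw [e2] at h1
        exact MS.transfer (by linarith [mul_comm (γ (m-(t+1))) (γ (m-(t+1)+2)), h2] :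
            (0:ℝ) < γ (m-(t+1)+2) * γ (m-(t+1))) (by
          rw [mul_comm] at h1; exact h1)
    have hcons : ∀ i, A ≤ i → i + 1 ≤ B → 0 < γ i * γ (i+1) := by
      intro i h1 h2
      rcases le_or_gt m i with hmi | him
      · exact hup i hmi h2
      · have h3 := hdown (m - i) (by omega)
        rwa [show m - (m - i) = i by omega] at h3
    have hchain : ∀ i, A ≤ i → i ≤ B → 0 < γ A * γ i := by
      intro i hAi
      induction i, hAi using Nat.le_induction with
      | base => intro _; exact mul_self_pos.mpr hA
      | succ n hn ih =>
        intro hb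
        have h1 := ih (by omega)
        have h2 := hcons n hn (by omega)
        exact MS.transfer (by rw [mul_comm] at h1; exact h1) h2
    have hj' := hchain j (by omega) (by omega)
    have hk' := hchain k (by omega) (by omega)
    nlinarith [mul_pos hj' hk', mul_self_pos.mpr hA]
end

section
/- Let {γ_k} be a sequence belonging to the intersection over all simple sets of polynomials Q of the set of Q-multiplier sequences. Then either {γ_k} is a constant sequence, or γ_k = 0 for all k ≥ 2. -/
open Polynomial

set_option linter.unnecessarySeqFocus false

lemma zpow1 (k : ℕ) (hk : 1 ≤ k) :
    (Complex.exp (↑(Real.pi/(2*k)) * Complex.I))^k = Complex.I := by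
  rw [← Complex.exp_nat_mul]
  have hk' : (k:ℂ) ≠ 0 := Nat.cast_ne_zero.mpr (by omega)
  have : (k:ℂ) * (↑(Real.pi/(2*k)) * Complex.I) = ↑(Real.pi/2) * Complex.I := by
    push_cast
    field_simp
  rw [this]
  simp [Complex.exp_mul_I]

lemma zpow2 (k : ℕ) (hk : 2 ≤ k) :
    (Complex.exp (↑(Real.pi/k) * Complex.I))^k = -1 := by
  rw [← Complex.exp_nat_mul]
  have hk' : (k:ℂ) ≠ 0 := Nat.cast_ne_zero.mpr (by omega)
  have : (k:ℂ) * (↑(Real.pi/k) * Complex.I) = ↑Real.pi * Complex.I := by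
    push_cast; field_simp
  rw [this, Complex.exp_pi_mul_I]

lemma zim (θ : ℝ) (h0 : 0 < θ) (h1 : θ < Real.pi) :
    (Complex.exp (↑θ * Complex.I)).im ≠ 0 := by
  rw [Complex.exp_ofReal_mul_I_im]
  exact ne_of_gt (Real.sin_pos_of_pos_of_lt_pi h0 h1)

lemma lin_val (z : ℂ) (hz : z.im ≠ 0) (u : ℂ) :
    ∃ a b : ℝ, (Polynomial.aeval z (C a * X + C b : Polynomial ℝ) = u) ∧ (u.im ≠ 0 → a ≠ 0) := by
  refine ⟨u.im / z.im, u.re - (u.im / z.im) * z.re, ?_, fun h => div_ne_zero h hz⟩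
  simp only [map_add, map_mul, aeval_C, aeval_X, Complex.coe_algebraMap]
  apply Complex.ext <;>
    simp [Complex.add_re, Complex.add_im, Complex.mul_re, Complex.mul_im,
      Complex.ofReal_re, Complex.ofReal_im] <;> field_simp

lemma exists_deg_val (j : ℕ) (hj : 1 ≤ j) (z : ℂ) (hz : z.im ≠ 0) (u : ℂ)
    (him : j = 1 → u.im ≠ 0) :
    ∃ f : Polynomial ℝ, f.degree = j ∧ Polynomial.aeval z f = u := by
  rcases eq_or_lt_of_le hj with h1 | h2
  · obtain ⟨a, b, hab, ha⟩ := lin_val z hz u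
    refine ⟨C a * X + C b, ?_, hab⟩
    rw [← h1]
    exact degree_linear (ha (him h1.symm))
  · obtain ⟨a, b, hab, -⟩ := lin_val z hz (u - z^j)
    refine ⟨X^j + (C a * X + C b), ?_, ?_⟩
    · rw [degree_add_eq_left_of_degree_lt, degree_X_pow]
      calc (C a * X + C b : Polynomial ℝ).degree ≤ 1 := degree_linear_le
        _ < (X^j : Polynomial ℝ).degree := by
            rw [degree_X_pow]; exact_mod_cast h2
    · rw [map_add, hab, map_pow, aeval_X]; ring

lemma rr_X_pow (k : ℕ) : RealRooted ((X : Polynomial ℝ)^k) := by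
  right
  intro z hz
  simp only [map_pow, aeval_X] at hz
  rcases pow_eq_zero_iff'.mp hz with ⟨rfl, -⟩
  rfl

lemma pair_constraint (γ : ℕ → ℝ)
    (h : ∀ Q : ℕ → Polynomial ℝ, SimpleSet Q → IsMultSeq Q γ)
    {j k : ℕ} (hjk : j < k) (f g : Polynomial ℝ)
    (hf : f.degree = j) (hg : g.degree = k)
    (hp : RealRooted (f + g)) :
    RealRooted (C (γ j) * f + C (γ k) * g) := by
  set Q : ℕ → Polynomial ℝ := fun t => if t = j then f else if t = k then g else X^t with hQdef
  have hQ : SimpleSet Q := by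
    intro t
    by_cases h1 : t = j
    · subst h1; simp [Q, hf]
    · by_cases h2 : t = k
      · subst h2; simp [Q, h1, hg]
      · simp [Q, h1, h2, degree_X_pow]
  set a : ℕ → ℝ := fun t => if t = j then 1 else if t = k then 1 else 0 with hadef
  have hsub : ({j, k} : Finset ℕ) ⊆ Finset.range (k+1) := by
    intro t ht
    simp only [Finset.mem_insert, Finset.mem_singleton] at ht
    rcases ht with rfl | rfl <;> simp [Finset.mem_range] <;> omega
  have hzero : ∀ t ∈ Finset.range (k+1), t ∉ ({j,k} : Finset ℕ) →
      C (a t) * Q t = 0 := by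
    intro t _ ht
    simp only [Finset.mem_insert, Finset.mem_singleton, not_or] at ht
    simp [a, ht.1, ht.2]
  have hzero' : ∀ t ∈ Finset.range (k+1), t ∉ ({j,k} : Finset ℕ) →
      C (a t * γ t) * Q t = 0 := by
    intro t _ ht
    simp only [Finset.mem_insert, Finset.mem_singleton, not_or] at ht
    simp [a, ht.1, ht.2]
  have h1 : ∑ t ∈ Finset.range (k+1), C (a t) * Q t = f + g := by
    rw [← Finset.sum_subset hsub hzero, Finset.sum_pair hjk.ne]
    simp [a, Q, hjk.ne, hjk.ne']
  have h2 : ∑ t ∈ Finset.range (k+1), C (a t * γ t) * Q t = C (γ j) * f + C (γ k) * g := by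
    rw [← Finset.sum_subset hsub hzero', Finset.sum_pair hjk.ne]
    simp [a, Q, hjk.ne, hjk.ne']
  have := h Q hQ k a (by rw [h1]; exact hp)
  rwa [h2] at this

lemma master (γ : ℕ → ℝ)
    (h : ∀ Q : ℕ → Polynomial ℝ, SimpleSet Q → IsMultSeq Q γ)
    {j k : ℕ} (hjk : j < k) (f : Polynomial ℝ) (hf : f.degree = j)
    (z : ℂ) (hz : z.im ≠ 0)
    (hval : (γ j : ℂ) * Polynomial.aeval z f + (γ k : ℂ) * (z^k - Polynomial.aeval z f) = 0) :
    γ k = 0 ∧ (C (γ j) * f : Polynomial ℝ) = 0 := by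
  set g : Polynomial ℝ := X^k - f with hgdef
  have hdlt : f.degree < (X^k : Polynomial ℝ).degree := by
    rw [hf, degree_X_pow]; exact_mod_cast hjk
  have hg : g.degree = k := by
    rw [hgdef, degree_sub_eq_left_of_degree_lt hdlt, degree_X_pow]
  have hsum : f + g = X^k := by rw [hgdef]; ring
  have hrr := pair_constraint γ h hjk f g hf hg (by rw [hsum]; exact rr_X_pow k)
  set q : Polynomial ℝ := C (γ j) * f + C (γ k) * g with hqdef
  have hq0 : q = 0 := by
    rcases hrr with h0 | hroots
    · exact h0
    · exfalso
      apply hz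
      apply hroots z
      have : Polynomial.aeval z q =
          (γ j : ℂ) * Polynomial.aeval z f + (γ k : ℂ) * (z^k - Polynomial.aeval z f) := by
        simp [q, g, map_sub, map_pow]
      rw [this, hval]
  have hfk : f.coeff k = 0 := coeff_eq_zero_of_degree_lt (by rw [hf]; exact_mod_cast hjk)
  have hck : γ k = 0 := by
    have := congrArg (fun p => Polynomial.coeff p k) hq0
    simpa [q, g, coeff_sub, coeff_X_pow, hfk] using this
  refine ⟨hck, ?_⟩
  rw [hqdef, hck] at hq0
  simpa using hq0

theorem stmt_12 (γ : ℕ → ℝ)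
    (h : ∀ Q : ℕ → Polynomial ℝ, SimpleSet Q → IsMultSeq Q γ) :
    (∀ k : ℕ, γ k = γ 0) ∨ (∀ k : ℕ, 2 ≤ k → γ k = 0) := by
  by_cases hz2 : ∀ k, 2 ≤ k → γ k = 0
  · exact Or.inr hz2
  left
  push_neg at hz2
  obtain ⟨m, hm2, hm0⟩ := hz2
  have hIim : (Complex.I).im ≠ 0 := by simp
  -- Step A: all γ k for k ≥ 2 are nonzero
  have hnz : ∀ k, 2 ≤ k → γ k ≠ 0 := by
    intro k hk2 hk0
    rcases lt_trichotomy k m with hlt | rfl | hgt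
    · obtain ⟨f, hfdeg, hfval⟩ := exists_deg_val k (by omega) Complex.I hIim (Complex.I^m)
        (fun h1 => absurd h1 (by omega))
      have hval : (γ k : ℂ) * Polynomial.aeval Complex.I f +
          (γ m : ℂ) * (Complex.I^m - Polynomial.aeval Complex.I f) = 0 := by
        rw [hfval, hk0]; push_cast; ring
      exact hm0 (master γ h hlt f hfdeg Complex.I hIim hval).1
    · exact hm0 hk0
    · set f : Polynomial ℝ := (X^2 + C 1) * X^(m-2) with hfdef
      have h2deg : ((X^2 + C 1 : Polynomial ℝ)).degree = 2 := degree_X_pow_add_C (by norm_num) 1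
      have hfdeg : f.degree = m := by
        rw [hfdef, degree_mul, h2deg, degree_X_pow]
        exact_mod_cast (by omega : 2 + (m-2) = m)
      have hfval : Polynomial.aeval Complex.I f = 0 := by
        simp [hfdef, Complex.I_sq]
      have hval : (γ m : ℂ) * Polynomial.aeval Complex.I f +
          (γ k : ℂ) * (Complex.I^k - Polynomial.aeval Complex.I f) = 0 := by
        rw [hfval, hk0]; push_cast; ring
      have hm' := master γ h hgt f hfdeg Complex.I hIim hval
      have hfne : f ≠ 0 := fun h0 => by rw [h0] at hfdeg; simp at hfdeg
      rcases mul_eq_zero.mp hm'.2 with hC | hf0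
      · exact hm0 (by simpa using hC)
      · exact hfne hf0
  -- Step B: γ j = γ k for all j < k with k ≥ 2
  have heq : ∀ k, 2 ≤ k → ∀ j, j < k → γ j = γ k := by
    intro k hk2 j hjk
    by_contra hne
    have hc0 : γ j - γ k ≠ 0 := sub_ne_zero.mpr hne
    have hcc : ((γ j : ℂ) - γ k) ≠ 0 := by
      intro hc; apply hc0
      exact_mod_cast hc
    have hk0 : γ k ≠ 0 := hnz k hk2
    have hkk0 : ((γ k : ℝ) : ℂ) ≠ 0 := by exact_mod_cast hk0
    have hkr : (1:ℝ) < (k:ℝ) := by exact_mod_cast (by omega : 1 < k)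
    rcases Nat.eq_zero_or_pos j with rfl | hj1
    · -- j = 0, use z with z^k = -1
      set z := Complex.exp (↑(Real.pi/k) * Complex.I) with hzdef
      have hzk : z^k = -1 := zpow2 k hk2
      have hzim : z.im ≠ 0 := by
        apply zim
        · positivity
        · exact div_lt_self Real.pi_pos hkr
      set f : Polynomial ℝ := C (γ k / (γ 0 - γ k)) with hfdef
      have hfdeg : f.degree = (0:ℕ) := by
        rw [hfdef]
        exact degree_C (div_ne_zero hk0 hc0)
      have hfval : Polynomial.aeval z f = ((γ k / (γ 0 - γ k) : ℝ) : ℂ) := by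
        simp [hfdef]
      have hval : (γ 0 : ℂ) * Polynomial.aeval z f +
          (γ k : ℂ) * (z^k - Polynomial.aeval z f) = 0 := by
        rw [hfval, hzk]
        push_cast
        field_simp
        ring
      exact hk0 (master γ h hjk f hfdeg z hzim hval).1
    · -- j ≥ 1, use z with z^k = I
      set z := Complex.exp (↑(Real.pi/(2*k)) * Complex.I) with hzdef
      have hzk : z^k = Complex.I := zpow1 k (by omega)
      have hzim : z.im ≠ 0 := by
        apply zim
        · positivity
        · calc Real.pi/(2*k) < Real.pi/1 := by
                apply div_lt_div_of_pos_left Real.pi_pos one_pos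
                linarith
            _ = Real.pi := by ring
      set u : ℂ := ↑(-(γ k / (γ j - γ k))) * Complex.I with hudef
      have huim : u.im ≠ 0 := by
        have key : ∀ r : ℝ, ((r:ℂ) * Complex.I).im = r := fun r => by simp
        rw [hudef, key]
        exact neg_ne_zero.mpr (div_ne_zero hk0 hc0)
      obtain ⟨f, hfdeg, hfval⟩ := exists_deg_val j hj1 z hzim u (fun _ => huim)
      have hval : (γ j : ℂ) * Polynomial.aeval z f +
          (γ k : ℂ) * (z^k - Polynomial.aeval z f) = 0 := by
        rw [hfval, hzk, hudef]
        push_cast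
        field_simp
        ring
      exact hk0 (master γ h hjk f hfdeg z hzim hval).1
  intro k
  rcases Nat.lt_or_ge k 2 with hk | hk
  · interval_cases k
    · rfl
    · exact (heq 2 (le_refl 2) 1 (by omega)).trans (heq 2 (le_refl 2) 0 (by omega)).symm
  · exact (heq k hk 0 (by omega)).symm
end

section
/- Let α < 0 and let {γ_k} be a sequence of nonnegative reals that is a multiplier sequence with respect to the generalized Hermite basis H^(α). Then γ_{k+1} ≤ γ_k for all k ≥ 1. -/
open Polynomial

/-- The generalized Hermite polynomials, satisfying the generating relation
$\sum_n H_n^{(\alpha)}(x) t^n/n! = e^{xt - \alpha t^2/2}$; in particular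
$H_0^{(\alpha)} = 1$ and $x^2 = H_2^{(\alpha)}(x) + \alpha H_0^{(\alpha)}(x)$. -/
noncomputable def genHermite (α : ℝ) (n : ℕ) : Polynomial ℝ :=
  ∑ k ∈ Finset.range (n / 2 + 1),
    Polynomial.C ((n.factorial : ℝ) * (-α / 2) ^ k /
      ((k.factorial : ℝ) * ((n - 2 * k).factorial : ℝ))) * Polynomial.X ^ (n - 2 * k)

lemma genHermite_coeff_eq_zero (α : ℝ) {n i : ℕ} (h : n < i) : (genHermite α n).coeff i = 0 := by
  unfold genHermite
  rw [Polynomial.finset_sum_coeff]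
  apply Finset.sum_eq_zero
  intro k _
  rw [Polynomial.coeff_C_mul, Polynomial.coeff_X_pow]
  have : ¬ (i = n - 2 * k) := by omega
  simp [this]

lemma genHermite_coeff_self (α : ℝ) (n : ℕ) : (genHermite α n).coeff n = 1 := by
  unfold genHermite
  rw [Polynomial.finset_sum_coeff]
  rw [Finset.sum_eq_single 0]
  · rw [Polynomial.coeff_C_mul, Polynomial.coeff_X_pow]
    have h : ((n.factorial : ℝ)) ≠ 0 := Nat.cast_ne_zero.mpr n.factorial_ne_zero
    simp [h]
  · intro k hk hk0
    rw [Polynomial.coeff_C_mul, Polynomial.coeff_X_pow]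
    have h2k : 2 * k ≤ n := by
      have := Finset.mem_range.mp hk
      omega
    have : ¬ (n = n - 2 * k) := by omega
    simp [this]
  · intro h
    exact absurd (Finset.mem_range.mpr (Nat.succ_pos _)) h

lemma genHermite_coeff_sub_one (α : ℝ) (m : ℕ) : (genHermite α (m+1)).coeff m = 0 := by
  unfold genHermite
  rw [Polynomial.finset_sum_coeff]
  apply Finset.sum_eq_zero
  intro k hk
  rw [Polynomial.coeff_C_mul, Polynomial.coeff_X_pow]
  have h2k : 2 * k ≤ m + 1 := by
    have := Finset.mem_range.mp hk
    omega
  have : ¬ (m = m + 1 - 2 * k) := by omega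
  simp [this]

lemma genHermite_coeff_sub_two (α : ℝ) (m : ℕ) :
    (genHermite α (m+2)).coeff m = -α * (m+2) * (m+1) / 2 := by
  unfold genHermite
  rw [Polynomial.finset_sum_coeff]
  rw [Finset.sum_eq_single 1]
  · rw [Polynomial.coeff_C_mul, Polynomial.coeff_X_pow]
    have h : m = m + 2 - 2 * 1 := by omega
    rw [if_pos h]
    have hm : ((m.factorial : ℝ)) ≠ 0 := Nat.cast_ne_zero.mpr m.factorial_ne_zero
    have hfac : (((m+2).factorial : ℝ)) = (m+2) * (m+1) * m.factorial := by
      rw [Nat.factorial_succ, Nat.factorial_succ]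
      push_cast
      ring
    have h2 : m + 2 - 2 * 1 = m := by omega
    rw [h2, hfac]
    field_simp
    ring
  · intro k hk hk1
    rw [Polynomial.coeff_C_mul, Polynomial.coeff_X_pow]
    have h2k : 2 * k ≤ m + 2 := by
      have := Finset.mem_range.mp hk
      omega
    have : ¬ (m = m + 2 - 2 * k) := by omega
    simp [this]
  · intro h
    exact absurd (Finset.mem_range.mpr (by omega : 1 < (m+2)/2 + 1)) h

lemma genHermite_zero (α : ℝ) : genHermite α 0 = 1 := by
  unfold genHermite
  simp [Nat.factorial]

lemma exists_genHermite_rep (α : ℝ) :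
    ∀ (n : ℕ) (p : Polynomial ℝ), p.natDegree ≤ n →
      ∃ a : ℕ → ℝ, ∑ j ∈ Finset.range (n+1), Polynomial.C (a j) * genHermite α j = p := by
  intro n
  induction n with
  | zero =>
      intro p hp
      refine ⟨fun _ => p.coeff 0, ?_⟩
      have h := Polynomial.eq_C_of_natDegree_le_zero hp
      rw [Finset.sum_range_one, genHermite_zero, mul_one, ← h]
  | succ n ih =>
      intro p hp
      set t := p.coeff (n+1) with ht
      set q := p - Polynomial.C t * genHermite α (n+1) with hq
      have hqdeg : q.natDegree ≤ n := by
        rw [Polynomial.natDegree_le_iff_coeff_eq_zero]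
        intro m hm
        rw [hq, Polynomial.coeff_sub, Polynomial.coeff_C_mul]
        rcases eq_or_lt_of_le (Nat.succ_le_of_lt hm) with h | h
        · rw [← h, genHermite_coeff_self, mul_one, ← ht, sub_self]
        · rw [Polynomial.coeff_eq_zero_of_natDegree_lt (lt_of_le_of_lt hp h),
            genHermite_coeff_eq_zero α h, mul_zero, sub_zero]
      obtain ⟨a, ha⟩ := ih q hqdeg
      refine ⟨fun j => if j = n+1 then t else a j, ?_⟩
      rw [Finset.sum_range_succ]
      have hs : ∑ j ∈ Finset.range (n+1),
          Polynomial.C (if j = n+1 then t else a j) * genHermite α j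
          = ∑ j ∈ Finset.range (n+1), Polynomial.C (a j) * genHermite α j := by
        apply Finset.sum_congr rfl
        intro j hj
        have : j ≠ n+1 := by have := Finset.mem_range.mp hj; omega
        simp [this]
      rw [hs, ha]
      have he : (fun j => if j = n+1 then t else a j) (n+1) = t := by simp
      rw [he, hq]
      ring

lemma coeff_comb_lt (α : ℝ) (d : ℕ → ℝ) (N i : ℕ) (hi : N ≤ i) :
    (∑ j ∈ Finset.range N, Polynomial.C (d j) * genHermite α j).coeff i = 0 := by
  rw [Polynomial.finset_sum_coeff]
  apply Finset.sum_eq_zero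
  intro j hj
  rw [Polynomial.coeff_C_mul,
    genHermite_coeff_eq_zero α (lt_of_lt_of_le (Finset.mem_range.mp hj) hi), mul_zero]

lemma coeff_comb_top (α : ℝ) (d : ℕ → ℝ) (N : ℕ) :
    (∑ j ∈ Finset.range (N+1), Polynomial.C (d j) * genHermite α j).coeff N = d N := by
  rw [Finset.sum_range_succ, Polynomial.coeff_add, coeff_comb_lt α d N N le_rfl,
    Polynomial.coeff_C_mul, genHermite_coeff_self, zero_add, mul_one]

lemma coeff_comb_snd (α : ℝ) (d : ℕ → ℝ) (N : ℕ) :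
    (∑ j ∈ Finset.range (N+2), Polynomial.C (d j) * genHermite α j).coeff N = d N := by
  rw [Finset.sum_range_succ, Polynomial.coeff_add, coeff_comb_top,
    Polynomial.coeff_C_mul, genHermite_coeff_sub_one, mul_zero, add_zero]

lemma coeff_comb_thd (α : ℝ) (d : ℕ → ℝ) (N : ℕ) :
    (∑ j ∈ Finset.range (N+3), Polynomial.C (d j) * genHermite α j).coeff N
      = d N + d (N+2) * (-α * (N+2) * (N+1) / 2) := by
  rw [Finset.sum_range_succ, Polynomial.coeff_add, coeff_comb_snd,
    Polynomial.coeff_C_mul, genHermite_coeff_sub_two]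

lemma card_roots_of_allreal :
    ∀ (n : ℕ) (p : Polynomial ℝ), p ≠ 0 → p.natDegree = n →
      (∀ z : ℂ, Polynomial.aeval z p = 0 → z.im = 0) →
      Multiset.card p.roots = p.natDegree := by
  intro n
  induction n with
  | zero =>
      intro p hp h0 _
      have := Polynomial.card_roots' p
      omega
  | succ n ih =>
      intro p hp hdeg hreal
      have hinj : Function.Injective (algebraMap ℝ ℂ) := (algebraMap ℝ ℂ).injective
      have hmapne : p.map (algebraMap ℝ ℂ) ≠ 0 :=
        (Polynomial.map_ne_zero_iff hinj).mpr hp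
      have hdegpos : 0 < (p.map (algebraMap ℝ ℂ)).degree := by
        rw [Polynomial.degree_map_eq_of_injective hinj, Polynomial.degree_eq_natDegree hp, hdeg]
        exact_mod_cast Nat.succ_pos n
      obtain ⟨z, hz⟩ := Complex.exists_root hdegpos
      have hzero : Polynomial.aeval z p = 0 := by
        rw [Polynomial.aeval_def, ← Polynomial.eval_map]
        exact hz
      have him : z.im = 0 := hreal z hzero
      set r := z.re with hr
      have hz_eq : (r : ℂ) = z := Complex.ext rfl (by simp [him])
      have hroot : p.eval r = 0 := by
        have : Polynomial.aeval ((r : ℂ)) p = ((p.eval r : ℝ) : ℂ) := by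
          rw [show ((r:ℂ)) = algebraMap ℝ ℂ r from rfl,
            Polynomial.aeval_algebraMap_apply_eq_algebraMap_eval]
          rfl
        rw [hz_eq, hzero] at this
        exact_mod_cast this.symm
      obtain ⟨q, hfact⟩ := (Polynomial.dvd_iff_isRoot.mpr hroot)
      have hq : q ≠ 0 := by
        intro h
        rw [h, mul_zero] at hfact
        exact hp hfact
      have hXC : (X - C r : Polynomial ℝ) ≠ 0 := Polynomial.X_sub_C_ne_zero r
      have hnd : p.natDegree = 1 + q.natDegree := by
        rw [hfact, Polynomial.natDegree_mul hXC hq, Polynomial.natDegree_X_sub_C]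
      have hqreal : ∀ z' : ℂ, Polynomial.aeval z' q = 0 → z'.im = 0 := by
        intro z' hz'
        apply hreal z'
        rw [hfact, map_mul, hz', mul_zero]
      have hqcard := ih q hq (by omega) hqreal
      have hc : Multiset.card p.roots = 1 + Multiset.card q.roots := by
        conv_lhs => rw [hfact]
        rw [Polynomial.roots_mul (hfact ▸ hp), Polynomial.roots_X_sub_C]
        simp
        omega
      omega

lemma allreal_of_card (p : Polynomial ℝ) (hp : p ≠ 0)
    (h : Multiset.card p.roots = p.natDegree) :
    ∀ z : ℂ, Polynomial.aeval z p = 0 → z.im = 0 := by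
  have hs : p.Splits := (Polynomial.splits_iff_card_roots).mpr h
  have hfac := Polynomial.Splits.eq_prod_roots hs
  intro z hz
  rw [hfac, map_mul, Polynomial.aeval_C, map_multiset_prod] at hz
  rcases mul_eq_zero.mp hz with h1 | h2
  · exact absurd h1 (by
      simp only [Complex.coe_algebraMap, Complex.ofReal_eq_zero]
      exact Polynomial.leadingCoeff_ne_zero.mpr hp)
  · rw [Multiset.map_map] at h2
    obtain ⟨a, ha, hz0⟩ := Multiset.mem_map.mp (Multiset.prod_eq_zero_iff.mp h2)
    simp only [Function.comp_apply, map_sub, Polynomial.aeval_X, Polynomial.aeval_C,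
      Complex.coe_algebraMap] at hz0
    have : z = (a : ℂ) := by linear_combination hz0
    rw [this]
    simp

lemma realRooted_derivative {p : Polynomial ℝ} (h : RealRooted p) :
    RealRooted (derivative p) := by
  rcases h with rfl | h
  · left; simp
  by_cases hp : p = 0
  · left; simp [hp]
  by_cases hd : p.natDegree = 0
  · left
    obtain ⟨a, rfl⟩ := Polynomial.natDegree_eq_zero.mp hd
    simp
  have hcard := card_roots_of_allreal p.natDegree p hp rfl h
  have hle := Polynomial.card_roots_le_derivative p
  have hd' : derivative p ≠ 0 := fun h0 =>
    hd (Polynomial.natDegree_eq_zero_of_derivative_eq_zero h0)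
  have hdle : (derivative p).natDegree ≤ p.natDegree - 1 := Polynomial.natDegree_derivative_le p
  have hcard' := Polynomial.card_roots' (derivative p)
  right
  apply allreal_of_card _ hd'
  omega

lemma realRooted_iterate (m : ℕ) (p : Polynomial ℝ) (h : RealRooted p) :
    RealRooted (derivative^[m] p) := by
  induction m with
  | zero => exact h
  | succ n ih => rw [Function.iterate_succ_apply']; exact realRooted_derivative ih

lemma disc_nonneg_of_realRooted (q : Polynomial ℝ) (hq2 : q.natDegree ≤ 2)
    (hA : q.coeff 2 ≠ 0) (h : RealRooted q) :
    4 * q.coeff 2 * q.coeff 0 ≤ (q.coeff 1)^2 := by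
  by_contra hlt
  push_neg at hlt
  set A := q.coeff 2 with hAdef
  set B := q.coeff 1 with hBdef
  set C0 := q.coeff 0 with hCdef
  have hq0 : q ≠ 0 := fun h0 => hA (by simp [hAdef, h0])
  rcases h with h | h
  · exact hq0 h
  set s := Real.sqrt (4*A*C0 - B^2) with hs
  have hspos : 0 < s := Real.sqrt_pos.mpr (by linarith)
  have hs2 : s^2 = 4*A*C0 - B^2 := Real.sq_sqrt (by linarith)
  set z : ℂ := Complex.ofReal (-B/(2*A)) + Complex.ofReal (s/(2*A)) * Complex.I with hz
  have hA' : (A : ℂ) ≠ 0 := by exact_mod_cast hA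
  have h1 : 2*(A:ℂ)*z + B = s * Complex.I := by
    rw [hz]
    push_cast
    field_simp
    ring
  have h2 : (2*(A:ℂ)*z + B)^2 = (B:ℂ)^2 - 4*A*C0 := by
    rw [h1, mul_pow, Complex.I_sq]
    have : ((s:ℂ))^2 = ((4*A*C0 - B^2 : ℝ) : ℂ) := by exact_mod_cast congrArg Complex.ofReal hs2
    rw [this]
    push_cast
    ring
  have h3 : (4*(A:ℂ)) * ((A:ℂ)*z^2 + B*z + C0) = 0 := by linear_combination h2
  have hroot : (A:ℂ)*z^2 + (B:ℂ)*z + (C0:ℂ) = 0 := by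
    rcases mul_eq_zero.mp h3 with h4 | h4
    · exact absurd h4 (by simpa using hA')
    · exact h4
  have hev : Polynomial.aeval z q = (C0:ℂ) + (B:ℂ)*z + (A:ℂ)*z^2 := by
    rw [Polynomial.aeval_eq_sum_range' (Nat.lt_succ_of_le hq2) z]
    rw [Finset.sum_range_succ, Finset.sum_range_succ, Finset.sum_range_one]
    simp only [pow_zero, pow_one, ← hAdef, ← hBdef, ← hCdef]
    rw [Complex.real_smul, Complex.real_smul, Complex.real_smul]
    ring
  have him : z.im = 0 := h z (by rw [hev]; linear_combination hroot)
  rw [hz] at him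
  simp only [Complex.add_im, Complex.ofReal_im, Complex.mul_im, Complex.I_im, Complex.I_re,
    Complex.ofReal_re, mul_zero, mul_one, zero_add] at him
  have : s / (2*A) ≠ 0 := div_ne_zero hspos.ne' (by simpa using hA)
  exact this (by linarith [him])

lemma descFac_one (m : ℕ) : (m+1).descFactorial m = (m+1).factorial := by
  induction m with
  | zero => rfl
  | succ n ih => rw [Nat.succ_descFactorial_succ, ih, ← Nat.factorial_succ]

lemma descFac_two (m : ℕ) : 2 * ((m+2).descFactorial m) = (m+2).factorial := by
  induction m with
  | zero => rfl
  | succ n ih =>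
      rw [Nat.succ_descFactorial_succ, Nat.factorial_succ, ← ih]
      ring

set_option maxHeartbeats 1000000 in
theorem stmt_15 (α : ℝ) (hα : α < 0) (γ : ℕ → ℝ) (hpos : ∀ k, 0 ≤ γ k)
    (hγ : IsMultSeq (genHermite α) γ) :
    ∀ k : ℕ, 1 ≤ k → γ (k + 1) ≤ γ k := by
  intro k hk
  obtain ⟨m, rfl⟩ : ∃ m, k = m + 1 := ⟨k - 1, by omega⟩
  show γ (m + 2) ≤ γ (m + 1)
  set c := Real.sqrt (-α) with hc
  have hc2 : c ^ 2 = -α := Real.sq_sqrt (by linarith)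
  have hcpos : 0 < c := Real.sqrt_pos.mpr (by linarith)
  -- the test polynomial
  set P : Polynomial ℝ := (X + C c) ^ (m + 2) with hP
  have hPdeg : P.natDegree ≤ m + 2 := by
    rw [hP, Polynomial.natDegree_pow, Polynomial.natDegree_X_add_C, mul_one]
  obtain ⟨b, hb⟩ := exists_genHermite_rep α (m+2) P hPdeg
  -- coefficients of b
  have hb2 : b (m+2) = 1 := by
    have h := congrArg (fun p => Polynomial.coeff p (m+2)) hb
    simp only [coeff_comb_top] at h
    rw [h, hP, Polynomial.coeff_X_add_C_pow]
    simp
  have hb1 : b (m+1) = (m+2) * c := by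
    have h := congrArg (fun p => Polynomial.coeff p (m+1)) hb
    rw [show m + 2 + 1 = (m+1) + 2 from by omega] at h
    rw [coeff_comb_snd] at h
    rw [h, hP, Polynomial.coeff_X_add_C_pow]
    rw [show m + 2 - (m+1) = 1 from by omega, pow_one, Nat.choose_succ_self_right]
    push_cast
    ring
  have hbm : b m = 0 := by
    have h := congrArg (fun p => Polynomial.coeff p m) hb
    rw [show m + 2 + 1 = m + 3 from by omega] at h
    rw [coeff_comb_thd] at h
    rw [hP, Polynomial.coeff_X_add_C_pow] at h
    rw [show m + 2 - m = 2 from by omega] at h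
    have hch : ((m+2).choose m : ℝ) * 2 = (m+2) * (m+1) := by
      have h1 := Nat.choose_mul_factorial_mul_factorial (show m ≤ m + 2 by omega)
      have h2 : m + 2 - m = 2 := by omega
      rw [h2] at h1
      have h3 : ((m+2).choose m * m.factorial * Nat.factorial 2 : ℝ)
          = ((m+2).factorial : ℝ) := by exact_mod_cast congrArg Nat.cast h1
      have hfac : (((m+2).factorial : ℝ)) = (m+2) * (m+1) * m.factorial := by
        rw [Nat.factorial_succ, Nat.factorial_succ]; push_cast; ring
      have hm : ((m.factorial : ℝ)) ≠ 0 := Nat.cast_ne_zero.mpr m.factorial_ne_zero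
      rw [hfac] at h3
      have : (Nat.factorial 2 : ℝ) = 2 := by norm_num [Nat.factorial]
      rw [this] at h3
      apply mul_right_cancel₀ hm
      ring_nf
      ring_nf at h3
      linarith [h3]
    rw [hb2, hc2] at h
    -- h : b m + 1 * (-α * (m+2) * (m+1) / 2) = (-α) * choose
    have : b m = -α * ((m+2).choose m : ℝ) - (-α * (m+2) * (m+1) / 2) := by linarith
    rw [this]
    nlinarith [hch]
  -- P is real rooted
  have hPreal : RealRooted (∑ j ∈ Finset.range (m + 2 + 1),
      Polynomial.C (b j) * genHermite α j) := by
    rw [hb]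
    right
    intro z hz
    rw [hP] at hz
    simp only [map_pow, map_add, Polynomial.aeval_X, Polynomial.aeval_C] at hz
    have h0 : z + (c : ℂ) = 0 := pow_eq_zero_iff (by omega) |>.mp hz
    have := congrArg Complex.im h0
    simpa using this
  have hQreal := hγ (m+2) b hPreal
  set Q : Polynomial ℝ := ∑ j ∈ Finset.range (m + 2 + 1),
      Polynomial.C (b j * γ j) * genHermite α j with hQdef
  -- coefficients of Q
  have hQ2 : Q.coeff (m+2) = γ (m+2) := by
    rw [hQdef, coeff_comb_top, hb2, one_mul]
  have hQ1 : Q.coeff (m+1) = (m+2) * c * γ (m+1) := by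
    rw [hQdef, show m + 2 + 1 = (m+1) + 2 from by omega, coeff_comb_snd, hb1]
  have hQ0 : Q.coeff m = γ (m+2) * (-α * (m+2) * (m+1) / 2) := by
    rw [hQdef, show m + 2 + 1 = m + 3 from by omega, coeff_comb_thd, hbm, hb2]
    ring
  rcases eq_or_lt_of_le (hpos (m+2)) with h0 | hg2pos
  · rw [← h0]; exact hpos (m+1)
  have hQnat : Q.natDegree ≤ m + 2 := by
    rw [Polynomial.natDegree_le_iff_coeff_eq_zero]
    intro i hi
    rw [hQdef]
    exact coeff_comb_lt α _ _ i (by omega)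
  set R : Polynomial ℝ := derivative^[m] Q with hR
  have hRreal : RealRooted R := realRooted_iterate m Q hQreal
  have hRdeg : R.natDegree ≤ 2 := by
    rw [Polynomial.natDegree_le_iff_coeff_eq_zero]
    intro i hi
    rw [hR, Polynomial.coeff_iterate_derivative]
    have : Q.coeff (i + m) = 0 :=
      Polynomial.coeff_eq_zero_of_natDegree_lt (by omega)
    rw [this, smul_zero]
  have hR2 : R.coeff 2 = ((m+2).descFactorial m : ℝ) * γ (m+2) := by
    rw [hR, Polynomial.coeff_iterate_derivative, show 2 + m = m + 2 from by omega, hQ2,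
      nsmul_eq_mul]
  have hR1 : R.coeff 1 = ((m+1).descFactorial m : ℝ) * ((m+2) * c * γ (m+1)) := by
    rw [hR, Polynomial.coeff_iterate_derivative, show 1 + m = m + 1 from by omega, hQ1,
      nsmul_eq_mul]
  have hR0 : R.coeff 0 = ((m).descFactorial m : ℝ) * (γ (m+2) * (-α * (m+2) * (m+1) / 2)) := by
    rw [hR, Polynomial.coeff_iterate_derivative, show 0 + m = m from by omega, hQ0,
      nsmul_eq_mul]
  have hdne : (m+2).descFactorial m ≠ 0 := by
    simp only [ne_eq, Nat.descFactorial_eq_zero_iff_lt]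
    omega
  have hdpos : 0 < ((m+2).descFactorial m : ℝ) := by
    exact_mod_cast Nat.pos_of_ne_zero hdne
  have hAne : R.coeff 2 ≠ 0 := by
    rw [hR2]; exact (mul_pos hdpos hg2pos).ne'
  have hdisc := disc_nonneg_of_realRooted R hRdeg hAne hRreal
  -- arithmetic
  set F : ℝ := ((m+1).factorial : ℝ) with hF
  set G : ℝ := ((m).factorial : ℝ) with hG
  have hFpos : 0 < F := by rw [hF]; exact_mod_cast (m+1).factorial_pos
  have hGpos : 0 < G := by rw [hG]; exact_mod_cast (m).factorial_pos
  have hFG : F = (m+1) * G := by rw [hF, hG, Nat.factorial_succ]; push_cast; ring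
  have hD1R : ((m+1).descFactorial m : ℝ) = F := by
    rw [hF]; exact_mod_cast congrArg Nat.cast (descFac_one m)
  have hD3R : ((m).descFactorial m : ℝ) = G := by
    rw [hG]; exact_mod_cast congrArg Nat.cast (Nat.descFactorial_self m)
  have hD2R : ((m+2).descFactorial m : ℝ) = (m+2) * F / 2 := by
    have h1 : (2 : ℝ) * ((m+2).descFactorial m : ℝ) = ((m+2).factorial : ℝ) := by
      exact_mod_cast congrArg Nat.cast (descFac_two m)
    have h2 : (((m+2).factorial : ℝ)) = (m+2) * F := by
      rw [hF, Nat.factorial_succ]; push_cast; ring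
    linarith
  have e1 : 4 * R.coeff 2 * R.coeff 0 = ((m:ℝ)+2)^2 * F^2 * (-α) * γ (m+2)^2 := by
    rw [hR2, hR0, hD2R, hD3R, hFG]
    ring
  have e2 : (R.coeff 1)^2 = ((m:ℝ)+2)^2 * F^2 * (-α) * γ (m+1)^2 := by
    rw [hR1, hD1R]
    have : (F * (((m:ℝ)+2) * c * γ (m+1)))^2 = ((m:ℝ)+2)^2 * F^2 * c^2 * γ (m+1)^2 := by ring
    rw [this, hc2]
  rw [e1, e2] at hdisc
  have hposf : (0:ℝ) < ((m:ℝ)+2)^2 * F^2 * (-α) := by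
    have : (0:ℝ) < -α := by linarith
    positivity
  have hsq : γ (m+2)^2 ≤ γ (m+1)^2 := le_of_mul_le_mul_left hdisc hposf
  nlinarith [hpos (m+1), hpos (m+2), hsq]
end

section
/- Let Q and B be simple sets of polynomials, let α > 1 be such that {α^k} and {(1/α)^k} are both B-multiplier sequences. Write q_k(x) = Σ_{j=0}^k a_{k,j} b_j(x) and define q̂_k(x) = Σ_{j=0}^k α^j a_{k,j} b_j(x). Then every Q-multiplier sequence is also a Q̂-multiplier sequence, where Q̂ = {q̂_k}. -/
open Polynomial

lemma sum_swap_aux (B : ℕ → Polynomial ℝ) (n : ℕ) (f : ℕ → ℝ) (g : ℕ → ℕ → ℝ) :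
    ∑ k ∈ Finset.range (n+1), Polynomial.C (f k) *
        ∑ j ∈ Finset.range (k+1), Polynomial.C (g k j) * B j
    = ∑ j ∈ Finset.range (n+1),
        Polynomial.C (∑ k ∈ Finset.Ico j (n+1), f k * g k j) * B j := by
  have step1 : ∀ k ∈ Finset.range (n+1),
      Polynomial.C (f k) * ∑ j ∈ Finset.range (k+1), Polynomial.C (g k j) * B j
      = ∑ j ∈ Finset.range (k+1), Polynomial.C (f k * g k j) * B j := by
    intro k _
    rw [Finset.mul_sum]
    refine Finset.sum_congr rfl fun j _ => ?_
    rw [← mul_assoc, ← Polynomial.C_mul]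
  rw [Finset.sum_congr rfl step1]
  rw [Finset.sum_comm' (t' := Finset.range (n+1)) (s' := fun j => Finset.Ico j (n+1))
    (by intro k j; simp [Finset.mem_range, Finset.mem_Ico]; omega)]
  refine Finset.sum_congr rfl fun j _ => ?_
  rw [map_sum, Finset.sum_mul]

theorem stmt_19 (Q B : ℕ → Polynomial ℝ) (hQ : SimpleSet Q) (hB : SimpleSet B)
    (α : ℝ) (hα : 1 < α)
    (h1 : IsMultSeq B (fun k => α ^ k)) (h2 : IsMultSeq B (fun k => (1 / α) ^ k))
    (a : ℕ → ℕ → ℝ)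
    (ha : ∀ k, Q k = ∑ j ∈ Finset.range (k + 1), Polynomial.C (a k j) * B j)
    (Qhat : ℕ → Polynomial ℝ)
    (hQhat : ∀ k, Qhat k = ∑ j ∈ Finset.range (k + 1),
      Polynomial.C (α ^ j * a k j) * B j)
    (γ : ℕ → ℝ) (hγ : IsMultSeq Q γ) :
    IsMultSeq Qhat γ := by
  intro n c hc
  have hα0 : α ≠ 0 := ne_of_gt (lt_trans zero_lt_one hα)
  set d : ℕ → ℝ := fun j => ∑ k ∈ Finset.Ico j (n+1), c k * a k j with hd
  set e : ℕ → ℝ := fun j => ∑ k ∈ Finset.Ico j (n+1), (c k * γ k) * a k j with he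
  -- rewrite hc in terms of B-expansion
  have hc' : RealRooted (∑ j ∈ Finset.range (n+1),
      Polynomial.C (α ^ j * d j) * B j) := by
    have : (∑ k ∈ Finset.range (n+1), Polynomial.C (c k) * Qhat k)
        = ∑ j ∈ Finset.range (n+1), Polynomial.C (α ^ j * d j) * B j := by
      simp only [hQhat]
      rw [sum_swap_aux]
      refine Finset.sum_congr rfl fun j _ => ?_
      congr 1
      rw [hd, Finset.mul_sum]
      refine congrArg _ (Finset.sum_congr rfl fun k _ => by ring)
    rwa [this] at hc
  -- apply the (1/α)^j multiplier to recover the Q-expansion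
  have hQexp : RealRooted (∑ k ∈ Finset.range (n+1), Polynomial.C (c k) * Q k) := by
    have := h2 n (fun j => α ^ j * d j) hc'
    simp only at this
    have heq : ∀ j ∈ Finset.range (n+1),
        Polynomial.C (α ^ j * d j * (1/α) ^ j) * B j = Polynomial.C (d j) * B j := by
      intro j _
      congr 1
      congr 1
      rw [one_div, inv_pow, mul_comm (α ^ j), mul_assoc, mul_inv_cancel₀ (pow_ne_zero j hα0), mul_one]
    rw [Finset.sum_congr rfl heq] at this
    have : (∑ k ∈ Finset.range (n+1), Polynomial.C (c k) * Q k)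
        = ∑ j ∈ Finset.range (n+1), Polynomial.C (d j) * B j := by
      simp only [ha]
      rw [sum_swap_aux]
    rwa [this]
  -- apply γ
  have hγQ := hγ n c hQexp
  -- rewrite as B-expansion with coefficients e
  have hγQ' : RealRooted (∑ j ∈ Finset.range (n+1), Polynomial.C (e j) * B j) := by
    have : (∑ k ∈ Finset.range (n+1), Polynomial.C (c k * γ k) * Q k)
        = ∑ j ∈ Finset.range (n+1), Polynomial.C (e j) * B j := by
      simp only [ha]
      rw [sum_swap_aux]
    rwa [this] at hγQ
  -- apply α^j multiplier
  have final := h1 n e hγQ'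
  simp only at final
  have : (∑ k ∈ Finset.range (n+1), Polynomial.C (c k * γ k) * Qhat k)
      = ∑ j ∈ Finset.range (n+1), Polynomial.C (e j * α ^ j) * B j := by
    simp only [hQhat]
    rw [sum_swap_aux]
    refine Finset.sum_congr rfl fun j _ => ?_
    congr 1
    rw [he, Finset.sum_mul]
    refine congrArg _ (Finset.sum_congr rfl fun k _ => by ring)
  rwa [this]
end
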